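/- Let k and ℓ be positive integers, let D and F be Young diagrams with r(D) ≤ k and r(F) ≤ k+ℓ, and let P ∈ (ℤ_{≥0})^ℓ. Then the set Ω_{F,D,P} is finite and its cardinality equals Σ K_{F/E,A} · K_{D/E,B}, where the sum is over all Young diagrams E with r(E) ≤ k and all triples (A,B,C) ∈ (ℤ_{≥0})^ℓ × (ℤ_{≥0})^ℓ × (ℤ_{≥0})^{ℓ(ℓ−1)/2} with S(A,B,C) = P. -/

import Mathlib

open MvPolynomial TensorProduct
open scoped Classical

noncomputable section

namespace Pieri

/-! ### Young diagrams and skew Kostka numbers.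

A Young diagram is encoded as a finitely supported function `D : ℕ →₀ ℕ`
(0-indexed: `D i` is the length of row `i+1`), weakly decreasing. -/

def IsYoung (D : ℕ →₀ ℕ) : Prop := ∀ i, D (i + 1) ≤ D i

/-- `|D|`, the number of boxes. -/
def ysize (D : ℕ →₀ ℕ) : ℕ := D.sum fun _ e => e

/-- `Interlaces A B` : `A ⊒ B`, i.e. `a_j ≥ b_j ≥ a_{j+1}` for all `j`. -/
def Interlaces (A B : ℕ →₀ ℕ) : Prop := ∀ j, B j ≤ A j ∧ A (j + 1) ≤ B j

/-- Semistandard skew tableau of shape `F/E` with entries in `{1,…,m}` and content `M`.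
The filling `T` is normalized to be `0` outside the boxes of `F/E`. -/
def IsSkewSSYT (E F : ℕ →₀ ℕ) (m : ℕ) (M : Fin m → ℕ) (T : ℕ × ℕ → ℕ) : Prop :=
  (∀ i, E i ≤ F i) ∧
  (∀ i j, E i ≤ j → j < F i → 1 ≤ T (i, j) ∧ T (i, j) ≤ m) ∧
  (∀ i j, ¬(E i ≤ j ∧ j < F i) → T (i, j) = 0) ∧
  (∀ i j, E i ≤ j → j + 1 < F i → T (i, j) ≤ T (i, j + 1)) ∧
  (∀ i j, E i ≤ j → j < F i → E (i + 1) ≤ j → j < F (i + 1) → T (i, j) < T (i + 1, j)) ∧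
  (∀ r : Fin m, Set.ncard {c : ℕ × ℕ | E c.1 ≤ c.2 ∧ c.2 < F c.1 ∧ T c = (r : ℕ) + 1} = M r)

/-- The skew Kostka number `K_{F/E, M}`. -/
def kostka (E F : ℕ →₀ ℕ) (m : ℕ) (M : Fin m → ℕ) : ℕ :=
  Set.ncard {T : ℕ × ℕ → ℕ | IsSkewSSYT E F m M T}

/-! ### The posets `Γ(k,ℓ)` and `Γ̃(k,ℓ)` and the lattice cone `Ω(k,ℓ)`. -/

/-- Ambient type containing `Γ̃(k,ℓ)`: `Sum.inl (i,j)` encodes `γ_j^(i)`,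
`Sum.inr (s,t)` encodes `ε_{s,t}`. -/
abbrev GammaAmb : Type := (ℤ × ℕ) ⊕ (ℕ × ℕ)

def gammaSet (k l : ℕ) : Set (ℤ × ℕ) :=
  {p | -(l : ℤ) ≤ p.1 ∧ p.1 ≤ (l : ℤ) ∧ 1 ≤ p.2 ∧ (p.2 : ℤ) ≤ (k : ℤ) + max 0 p.1}

def epsSet (l : ℕ) : Set (ℕ × ℕ) := {p | 1 ≤ p.1 ∧ p.1 < p.2 ∧ p.2 ≤ l}

def gammaTildeSet (k l : ℕ) : Set GammaAmb :=
  Sum.inl '' gammaSet k l ∪ Sum.inr '' epsSet l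

/-- One-step generating relations of the partial order of `Γ(k,ℓ)`:
`gammaStep k l a b` means "`a ≥ b`" is one of the defining relations. -/
def gammaStep (k l : ℕ) : ℤ × ℕ → ℤ × ℕ → Prop := fun a b =>
  (∃ i j : ℕ, i < l ∧ 1 ≤ j ∧ j ≤ k + i ∧ a = ((i : ℤ) + 1, j) ∧ b = ((i : ℤ), j)) ∨
  (∃ i j : ℕ, i < l ∧ 1 ≤ j ∧ j ≤ k + i ∧ a = ((i : ℤ), j) ∧ b = ((i : ℤ) + 1, j + 1)) ∨
  (∃ i j : ℕ, i < l ∧ 1 ≤ j ∧ j ≤ k ∧ a = (-(i : ℤ) - 1, j) ∧ b = (-(i : ℤ), j)) ∨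
  (∃ i j : ℕ, i < l ∧ 1 ≤ j ∧ j + 1 ≤ k ∧ a = (-(i : ℤ), j) ∧ b = (-(i : ℤ) - 1, j + 1))

/-- `gammaGE k l a b` : `a ≥ b` in the partial order of `Γ(k,ℓ)` generated by the relations. -/
def gammaGE (k l : ℕ) : ℤ × ℕ → ℤ × ℕ → Prop := Relation.ReflTransGen (gammaStep k l)

/-- `tildeGE k l a b` : `a ≥ b` in `Γ̃(k,ℓ)`; each `ε_{s,t}` is comparable only with itself. -/
def tildeGE (k l : ℕ) : GammaAmb → GammaAmb → Prop := fun a b =>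
  (∃ p q, a = Sum.inl p ∧ b = Sum.inl q ∧ gammaGE k l p q) ∨ a = b

/-- `Ω(k,ℓ)`, the additive monoid of order-preserving functions `Γ̃(k,ℓ) → ℤ_{≥0}`,
encoded as functions on the ambient type vanishing outside `Γ̃(k,ℓ)`. -/
def OmegaM (k l : ℕ) : AddSubmonoid (GammaAmb → ℕ) where
  carrier := {f | (∀ a b, tildeGE k l a b → f b ≤ f a) ∧
    ∀ p, p ∉ gammaTildeSet k l → f p = 0}
  add_mem' := by
    rintro f g ⟨hf1, hf2⟩ ⟨hg1, hg2⟩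
    refine ⟨fun a b h => add_le_add (hf1 a b h) (hg1 a b h), fun p hp => ?_⟩
    simp [Pi.add_apply, hf2 p hp, hg2 p hp]
  zero_mem' := ⟨fun _ _ _ => le_rfl, fun _ _ => rfl⟩

def Omega (k l : ℕ) : Set (GammaAmb → ℕ) := OmegaM k l

/-- `f_{i,j}` as an integer. -/
def fval (f : GammaAmb → ℕ) (i : ℤ) (j : ℕ) : ℤ := (f (Sum.inl (i, j)) : ℤ)

/-- `A_j(f)`. -/
def Afun (k : ℕ) (f : GammaAmb → ℕ) (j : ℕ) : ℤ :=
  (∑ a ∈ Finset.Icc 1 (k + j), fval f (j : ℤ) a)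
    - ∑ b ∈ Finset.Icc 1 (k + j - 1), fval f ((j : ℤ) - 1) b

/-- `B_j(f)`. -/
def Bfun (k : ℕ) (f : GammaAmb → ℕ) (j : ℕ) : ℤ :=
  ∑ a ∈ Finset.Icc 1 k, (fval f (-(j : ℤ)) a - fval f (-(j : ℤ) + 1) a)

/-- `P_j(f)`. -/
def Pfun (k l : ℕ) (f : GammaAmb → ℕ) (j : ℕ) : ℤ :=
  Afun k f j + Bfun k f j + (∑ a ∈ Finset.Ico 1 j, (f (Sum.inr (a, j)) : ℤ))
    + ∑ b ∈ Finset.Icc (j + 1) l, (f (Sum.inr (j, b)) : ℤ)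

/-- `Ω_{F,D,P}` : the elements `f ∈ Ω(k,ℓ)` with `f_{-ℓ} = D`, `f_ℓ = F` and `P(f) = P`. -/
def OmegaFDP (k l : ℕ) (D F : ℕ →₀ ℕ) (P : Fin l → ℕ) : Set (GammaAmb → ℕ) :=
  {f ∈ Omega k l |
    (∀ a : ℕ, 1 ≤ a → a ≤ k → f (Sum.inl (-(l : ℤ), a)) = D (a - 1)) ∧
    (∀ a : ℕ, 1 ≤ a → a ≤ k + l → f (Sum.inl ((l : ℤ), a)) = F (a - 1)) ∧
    (∀ j : Fin l, Pfun k l f ((j : ℕ) + 1) = (P j : ℤ))}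

/-- `S(A,B,C)`. -/
def Scomb (l : ℕ) (A B : Fin l → ℕ) (C : ℕ × ℕ → ℕ) : Fin l → ℕ := fun i =>
  A i + B i + (∑ s ∈ Finset.Ico 1 ((i : ℕ) + 1), C (s, (i : ℕ) + 1))
    + ∑ t ∈ Finset.Icc ((i : ℕ) + 2) l, C ((i : ℕ) + 1, t)

/-! ### Increasing subsets -/

/-- The sequence `a_i` attached to `(c, I, J)`. -/
def aSeq (c : ℕ) (I J : Finset ℕ) (i : ℤ) : ℕ :=
  if 0 ≤ i then c + (J ∩ Finset.Icc 1 i.toNat).card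
  else c + (I ∩ Finset.Icc 1 (-i).toNat).card

/-- The increasing subset `A_{(c,I,J)}` of `Γ(k,ℓ)`. -/
def Acij (l c : ℕ) (I J : Finset ℕ) : Set (ℤ × ℕ) :=
  {p | -(l : ℤ) ≤ p.1 ∧ p.1 ≤ (l : ℤ) ∧ 1 ≤ p.2 ∧ p.2 ≤ aSeq c I J p.1}

/-- The increasing subset `A_{(c,I,J)} ∪ Z` of `Γ̃(k,ℓ)`. -/
def AcijT (l c : ℕ) (I J : Finset ℕ) (Z : Finset (ℕ × ℕ)) : Set GammaAmb :=
  Sum.inl '' Acij l c I J ∪ Sum.inr '' (Z : Set (ℕ × ℕ))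

def IsIncreasingG (k l : ℕ) (A : Set (ℤ × ℕ)) : Prop :=
  A ⊆ gammaSet k l ∧ ∀ a ∈ A, ∀ x ∈ gammaSet k l, gammaGE k l x a → x ∈ A

def IsIncreasingT (k l : ℕ) (A : Set GammaAmb) : Prop :=
  A ⊆ gammaTildeSet k l ∧ ∀ a ∈ A, ∀ x ∈ gammaTildeSet k l, tildeGE k l x a → x ∈ A

/-- Characteristic function `χ_A`. -/
def chiInd (A : Set GammaAmb) : GammaAmb → ℕ := A.indicator fun _ => 1

/-! ### The polynomial algebra `P_{n,k,ℓ}` and the action of `U_n × U_k` -/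

/-- Index type for the variables of `P_{n,k,ℓ}` (all indices 0-based):
`inl (i,j) ↦ x_{i+1,j+1}`, `inr (inl (i,j)) ↦ y_{i+1,j+1}`,
`inr (inr (inl (i,j))) ↦ r_{i+1,k+j+1}`, `inr (inr (inr ((s,t),_))) ↦ r_{k+s+1,k+t+1}`. -/
abbrev VarIdx (n k l : ℕ) : Type :=
  (Fin n × Fin k) ⊕ (Fin n × Fin l) ⊕ (Fin k × Fin l) ⊕ {p : Fin l × Fin l // p.1 < p.2}

abbrev PRing (n k l : ℕ) : Type := MvPolynomial (VarIdx n k l) ℂ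

/-- The variable `x_{i,j}` (1-based indices). -/
def xP (n k l : ℕ) (i j : ℕ) : PRing n k l :=
  if h : 1 ≤ i ∧ i ≤ n ∧ 1 ≤ j ∧ j ≤ k then
    X (Sum.inl (⟨i - 1, by omega⟩, ⟨j - 1, by omega⟩)) else 0

/-- The variable `y_{i,j}` (1-based indices). -/
def yP (n k l : ℕ) (i j : ℕ) : PRing n k l :=
  if h : 1 ≤ i ∧ i ≤ n ∧ 1 ≤ j ∧ j ≤ l then
    X (Sum.inr (Sum.inl (⟨i - 1, by omega⟩, ⟨j - 1, by omega⟩))) else 0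

/-- The variable `r_{i,k+j}` (1-based `i ≤ k`, `j ≤ l`). -/
def rP (n k l : ℕ) (i j : ℕ) : PRing n k l :=
  if h : 1 ≤ i ∧ i ≤ k ∧ 1 ≤ j ∧ j ≤ l then
    X (Sum.inr (Sum.inr (Sum.inl (⟨i - 1, by omega⟩, ⟨j - 1, by omega⟩)))) else 0

/-- The variable `r_{k+s,k+t}` (1-based, `1 ≤ s < t ≤ l`). -/
def sP (n k l : ℕ) (s t : ℕ) : PRing n k l :=
  if h : 1 ≤ s ∧ s < t ∧ t ≤ l then
    X (Sum.inr (Sum.inr (Sum.inr ⟨(⟨s - 1, by omega⟩, ⟨t - 1, by omega⟩),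
      by exact Fin.mk_lt_mk.mpr (by omega)⟩))) else 0

/-- Upper triangular unipotent matrices. -/
def IsUU {m : ℕ} (g : Matrix (Fin m) (Fin m) ℂ) : Prop :=
  (∀ i, g i i = 1) ∧ ∀ i j : Fin m, j < i → g i j = 0

/-- The action of a pair of matrices `(g,h)` on `P_{n,k,ℓ}`:
`x_{i,j} ↦ (gᵀXh)_{i,j}`, `y_{i,j} ↦ (gᵀY_j)_i`, `r_{i,k+j} ↦ (hᵀR_j)_i`,
`r_{k+s,k+t} ↦ r_{k+s,k+t}`. -/
def uAct (n k l : ℕ) (g : Matrix (Fin n) (Fin n) ℂ) (h : Matrix (Fin k) (Fin k) ℂ) :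
    PRing n k l →ₐ[ℂ] PRing n k l :=
  aeval fun v => match v with
    | Sum.inl (i, j) => ∑ a : Fin n, ∑ b : Fin k, C (g a i * h b j) * X (Sum.inl (a, b))
    | Sum.inr (Sum.inl (i, j)) => ∑ a : Fin n, C (g a i) * X (Sum.inr (Sum.inl (a, j)))
    | Sum.inr (Sum.inr (Sum.inl (i, j))) =>
        ∑ b : Fin k, C (h b i) * X (Sum.inr (Sum.inr (Sum.inl (b, j))))
    | Sum.inr (Sum.inr (Sum.inr st)) => X (Sum.inr (Sum.inr (Sum.inr st)))

/-- The Pieri algebra `𝔄_{n,k,ℓ} = (P_{n,k,ℓ})^{U_n × U_k}`. -/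
def invariants (n k l : ℕ) : Subalgebra ℂ (PRing n k l) where
  carrier := {f | ∀ g h, IsUU g → IsUU h → uAct n k l g h f = f}
  mul_mem' := by
    intro a b ha hb g h hg hh
    rw [map_mul, ha g h hg hh, hb g h hg hh]
  add_mem' := by
    intro a b ha hb g h hg hh
    rw [map_add, ha g h hg hh, hb g h hg hh]
  one_mem' := fun g h _ _ => map_one _
  zero_mem' := fun g h _ _ => map_zero _
  algebraMap_mem' := fun c g h _ _ => (uAct _ _ _ g h).commutes c

/-! ### The graded lexicographic order -/

/-- Rank of a variable: smaller rank = bigger variable in the order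
`x_{1,1} > x_{2,1} > ⋯ > x_{n,k} > y_{1,1} > ⋯ > y_{n,ℓ} > r_{1,k+1} > ⋯ > r_{k,k+ℓ}
> r_{k+1,k+2} > r_{k+1,k+3} > r_{k+2,k+3} > ⋯ > r_{k+ℓ-1,k+ℓ}`. -/
def vrank (n k l : ℕ) : VarIdx n k l → ℕ
  | Sum.inl (i, j) => j.val * n + i.val
  | Sum.inr (Sum.inl (i, j)) => n * k + j.val * n + i.val
  | Sum.inr (Sum.inr (Sum.inl (i, j))) => n * k + n * l + j.val * k + i.val
  | Sum.inr (Sum.inr (Sum.inr ⟨(s, t), _⟩)) =>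
      n * k + n * l + k * l + t.val * (t.val - 1) / 2 + s.val

/-- Total degree of an exponent vector. -/
def mdeg {n k l : ℕ} (α : VarIdx n k l →₀ ℕ) : ℕ := α.sum fun _ e => e

/-- `grlexLT n k l α β` : the monomial `x^α` is smaller than `x^β` in the graded
lexicographic order. -/
def grlexLT (n k l : ℕ) (α β : VarIdx n k l →₀ ℕ) : Prop :=
  mdeg α < mdeg β ∨ (mdeg α = mdeg β ∧
    ∃ v, α v < β v ∧ ∀ w, vrank n k l w < vrank n k l v → α w = β w)

/-- `IsLeadMon n k l f α` : `x^α` is the leading monomial of `f`. -/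
def IsLeadMon (n k l : ℕ) (f : PRing n k l) (α : VarIdx n k l →₀ ℕ) : Prop :=
  α ∈ f.support ∧ ∀ β ∈ f.support, β ≠ α → grlexLT n k l β α

/-! ### The determinants `η_{(c,I,J)}` -/

/-- The determinant `η_{(c,I,J)}`. -/
def eta (n k l : ℕ) (c : ℕ) (I J : Finset ℕ) : PRing n k l :=
  Matrix.det (Matrix.of fun a b : Fin (c + I.card + J.card) =>
    if a.val < c + J.card then
      if b.val < c + I.card then xP n k l (a.val + 1) (b.val + 1)
      else yP n k l (a.val + 1) ((J.sort (· ≤ ·)).getD (b.val - (c + I.card)) 0)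
    else
      if b.val < c + I.card then
        rP n k l (b.val + 1) ((I.sort (· ≤ ·)).getD (a.val - (c + J.card)) 0)
      else 0)

/-- `η_{χ_B}` for `B = A_{(c,I,J)} ∪ Z`. -/
def etaChi (n k l : ℕ) (c : ℕ) (I J : Finset ℕ) (Z : Finset (ℕ × ℕ)) : PRing n k l :=
  eta n k l c I J * ∏ p ∈ Z, sP n k l p.1 p.2

/-- `IsEtaOf n k l g q` : `q = ∏_j η_{χ_{A_j}}^{c_j}` for some expression
`g = ∑_j c_j χ_{A_j}` with `A_1 ⊆ ⋯ ⊆ A_N` a chain of increasing subsets of `Γ̃(k,ℓ)`. -/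
def IsEtaOf (n k l : ℕ) (g : GammaAmb → ℕ) (q : PRing n k l) : Prop :=
  ∃ (N : ℕ) (co : Fin N → ℕ) (A : Fin N → Set GammaAmb) (fac : Fin N → PRing n k l),
    (∀ j, IsIncreasingT k l (A j)) ∧
    (∀ j j' : Fin N, j ≤ j' → A j ⊆ A j') ∧
    (g = ∑ j : Fin N, co j • chiInd (A j)) ∧
    (∀ j, ∃ (c : ℕ) (I J : Finset ℕ) (Z : Finset (ℕ × ℕ)),
      c ≤ k ∧ I ⊆ Finset.Icc 1 l ∧ J ⊆ Finset.Icc 1 l ∧ I.card ≤ k - c ∧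
      (↑Z : Set (ℕ × ℕ)) ⊆ epsSet l ∧ A j = AcijT l c I J Z ∧
      fac j = etaChi n k l c I J Z) ∧
    q = ∏ j : Fin N, fac j ^ co j

/-- The monomial `m(g)` attached to `g ∈ Ω(k,ℓ)`. -/
def mOf (n k l : ℕ) (g : GammaAmb → ℕ) : PRing n k l :=
  (∏ u ∈ Finset.Icc 1 k, xP n k l u u ^ g (Sum.inl ((0 : ℤ), u)))
  * (∏ b ∈ Finset.Icc 1 l, ∏ a ∈ Finset.Icc 1 (k + b),
      yP n k l a b ^ (g (Sum.inl ((b : ℤ), a)) - g (Sum.inl ((b : ℤ) - 1, a))))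
  * (∏ j ∈ Finset.Icc 1 l, ∏ i ∈ Finset.Icc 1 k,
      rP n k l i j ^ (g (Sum.inl (-(j : ℤ), i)) - g (Sum.inl (-(j : ℤ) + 1, i))))
  * (∏ t ∈ Finset.Icc 1 l, ∏ s ∈ Finset.Ico 1 t, sP n k l s t ^ g (Sum.inr (s, t)))

/-! ### The homogeneous components `E_{F,D,P}` -/

/-- `f` is homogeneous of degree `d` in the set `S` of variables. -/
def HomogOn (n k l : ℕ) (f : PRing n k l) (S : Set (VarIdx n k l)) (d : ℕ) : Prop :=
  ∀ α ∈ f.support, (∑ v ∈ α.support, S.indicator (fun w => α w) v) = d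

/-- The variables `x_{i,1},…,x_{i,k}, y_{i,1},…,y_{i,ℓ}` (1-based `i`). -/
def rowSet (n k l : ℕ) (i : ℕ) : Set (VarIdx n k l) :=
  {v | match v with
    | Sum.inl (a, _) => (a : ℕ) + 1 = i
    | Sum.inr (Sum.inl (a, _)) => (a : ℕ) + 1 = i
    | _ => False}

/-- The variables `x_{1,j},…,x_{n,j}, r_{j,k+1},…,r_{j,k+ℓ}` (1-based `j`). -/
def colSet (n k l : ℕ) (j : ℕ) : Set (VarIdx n k l) :=
  {v | match v with
    | Sum.inl (_, b) => (b : ℕ) + 1 = j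
    | Sum.inr (Sum.inr (Sum.inl (b, _))) => (b : ℕ) + 1 = j
    | _ => False}

/-- The variables `y_{1,t},…,y_{n,t}, r_{1,k+t},…,r_{k,k+t}`, `r_{k+s,k+t} (s<t)`,
`r_{k+t,k+t'} (t<t')` (1-based `t`). -/
def tSet (n k l : ℕ) (t : ℕ) : Set (VarIdx n k l) :=
  {v | match v with
    | Sum.inr (Sum.inl (_, b)) => (b : ℕ) + 1 = t
    | Sum.inr (Sum.inr (Sum.inl (_, b))) => (b : ℕ) + 1 = t
    | Sum.inr (Sum.inr (Sum.inr ⟨(s, u), _⟩)) => (s : ℕ) + 1 = t ∨ (u : ℕ) + 1 = t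
    | _ => False}

theorem homogOn_add {n k l : ℕ} {f g : PRing n k l} {S : Set (VarIdx n k l)} {d : ℕ}
    (hf : HomogOn n k l f S d) (hg : HomogOn n k l g S d) : HomogOn n k l (f + g) S d := by
  intro α hα
  by_cases h : α ∈ f.support
  · exact hf α h
  · refine hg α ?_
    by_contra hg'
    refine MvPolynomial.mem_support_iff.mp hα ?_
    rw [MvPolynomial.coeff_add, MvPolynomial.notMem_support_iff.mp h,
      MvPolynomial.notMem_support_iff.mp hg', add_zero]

/-- The homogeneous component `E_{F,D,P}` of `𝔄_{n,k,ℓ}`. -/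
def Esub (n k l : ℕ) (F D : ℕ →₀ ℕ) (Pv : Fin l → ℕ) : Submodule ℂ (PRing n k l) where
  carrier := {f | f ∈ invariants n k l ∧
    (∀ i : ℕ, 1 ≤ i → i ≤ n → HomogOn n k l f (rowSet n k l i) (F (i - 1))) ∧
    (∀ j : ℕ, 1 ≤ j → j ≤ k → HomogOn n k l f (colSet n k l j) (D (j - 1))) ∧
    (∀ t : Fin l, HomogOn n k l f (tSet n k l ((t : ℕ) + 1)) (Pv t))}
  add_mem' := by
    rintro f g ⟨hf0, hf1, hf2, hf3⟩ ⟨hg0, hg1, hg2, hg3⟩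
    exact ⟨add_mem hf0 hg0,
      fun i h1 h2 => homogOn_add (hf1 i h1 h2) (hg1 i h1 h2),
      fun j h1 h2 => homogOn_add (hf2 j h1 h2) (hg2 j h1 h2),
      fun t => homogOn_add (hf3 t) (hg3 t)⟩
  zero_mem' := by
    refine ⟨zero_mem _, fun i _ _ α hα => ?_, fun j _ _ α hα => ?_, fun t α hα => ?_⟩ <;>
      simp at hα
  smul_mem' := by
    rintro c f ⟨hf0, hf1, hf2, hf3⟩
    refine ⟨(invariants n k l).smul_mem hf0 c,
      fun i h1 h2 α hα => hf1 i h1 h2 α (MvPolynomial.support_smul hα),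
      fun j h1 h2 α hα => hf2 j h1 h2 α (MvPolynomial.support_smul hα),
      fun t α hα => hf3 t α (MvPolynomial.support_smul hα)⟩

/-- The set of leading monomials of nonzero elements of `𝔄_{n,k,ℓ}`
(as monic monomial polynomials). -/
def LMset (n k l : ℕ) : Set (PRing n k l) :=
  {m | ∃ f ∈ invariants n k l, ∃ α, IsLeadMon n k l f α ∧
    m = MvPolynomial.monomial α (1 : ℂ)}


/-! ### Block for Statement 1 : the quotient `𝒫(M_{n,k+ℓ})/J` -/

abbrev QRing (n m : ℕ) : Type := MvPolynomial (Fin n × Fin m) ℂ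

/-- `r_{i,j} = ∑_{a=1}^n x_{a,i} x_{n-a+1,j}`. -/
def rQ (n m : ℕ) (i j : Fin m) : QRing n m := ∑ a : Fin n, X (a, i) * X (a.rev, j)

/-- The ideal `J` generated by `{r_{i,j} : 1 ≤ i,j ≤ k} ∪ {r_{k+j,k+j} : 1 ≤ j ≤ ℓ}`. -/
def JId (n k l : ℕ) : Ideal (QRing n (k + l)) :=
  Ideal.span ({p | ∃ i j : Fin (k + l), (i : ℕ) < k ∧ (j : ℕ) < k ∧ p = rQ n (k + l) i j} ∪
    {p | ∃ j : Fin (k + l), k ≤ (j : ℕ) ∧ p = rQ n (k + l) j j})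

/-- The substitution `x_{i,j} ↦ (g⁻¹ X h)_{i,j}` on `𝒫(M_{n,m})`. -/
def actQ (n m : ℕ) (g : Matrix (Fin n) (Fin n) ℂ) (h : Matrix (Fin m) (Fin m) ℂ) :
    QRing n m →ₐ[ℂ] QRing n m :=
  aeval fun p => ∑ a : Fin n, ∑ b : Fin m, C (g⁻¹ p.1 a * h b p.2) * X (a, b)

/-- The matrix of the symmetric bilinear form `⟨u,v⟩ = ∑ u_a v_{n-a+1}`. -/
def flipMat (n : ℕ) : Matrix (Fin n) (Fin n) ℂ := fun i j => if j = i.rev then 1 else 0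

/-- `g ∈ SO_n` : `g` preserves the form and has determinant 1. -/
def IsSO (n : ℕ) (g : Matrix (Fin n) (Fin n) ℂ) : Prop :=
  g.transpose * flipMat n * g = flipMat n ∧ g.det = 1

/-- `diag(h, 1_ℓ)`, the embedding of `GL_k` into `GL_{k+ℓ}`. -/
def embedU (k l : ℕ) (h : Matrix (Fin k) (Fin k) ℂ) : Matrix (Fin (k + l)) (Fin (k + l)) ℂ :=
  fun i j =>
    if hij : (i : ℕ) < k ∧ (j : ℕ) < k then h ⟨i.val, hij.1⟩ ⟨j.val, hij.2⟩
    else if i = j then 1 else 0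

/-- The invariants `(𝒫(M_{n,k+ℓ})/J)^{U_{SO_n} × U_k}` (invariance tested on every
representative). -/
def SqSet (n k l : ℕ) : Set (QRing n (k + l) ⧸ JId n k l) :=
  {q | ∀ (g : Matrix (Fin n) (Fin n) ℂ) (h : Matrix (Fin k) (Fin k) ℂ),
      IsUU g → IsSO n g → IsUU h →
      ∀ f : QRing n (k + l), Ideal.Quotient.mk (JId n k l) f = q →
        Ideal.Quotient.mk (JId n k l) (actQ n (k + l) g (embedU k l h) f) = q}

/-! ### Block for Statement 16 : the `Sp_{2n}` Pieri algebra -/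

abbrev QSp (n k : ℕ) : Type := MvPolynomial (Fin (2 * n) × Fin k) ℂ
abbrev YRing (n l : ℕ) : Type := MvPolynomial (Fin (2 * n) × Fin l) ℂ

/-- The matrix of the symplectic form `(u,v) = ∑_{a=1}^n (u_a v_{2n+1-a} - u_{2n+1-a} v_a)`. -/
def symplMat (n : ℕ) : Matrix (Fin (2 * n)) (Fin (2 * n)) ℂ :=
  fun i j => if j = i.rev then (if (i : ℕ) < n then 1 else -1) else 0

def IsSp (n : ℕ) (g : Matrix (Fin (2 * n)) (Fin (2 * n)) ℂ) : Prop :=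
  g.transpose * symplMat n * g = symplMat n

/-- The substitution `x_{i,j} ↦ (gᵀ T h)_{i,j}` on `𝒫(M_{2n,k})`. -/
def actSp (n k : ℕ) (g : Matrix (Fin (2 * n)) (Fin (2 * n)) ℂ)
    (h : Matrix (Fin k) (Fin k) ℂ) : QSp n k →ₐ[ℂ] QSp n k :=
  aeval fun p => ∑ a : Fin (2 * n), ∑ b : Fin k, C (g a p.1 * h b p.2) * X (a, b)

/-- The substitution `y_{i,j} ↦ (gᵀ Y_j)_i` on `𝒫(ℂ_1^{2n}) ⊗ ⋯ ⊗ 𝒫(ℂ_ℓ^{2n})`. -/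
def actY (n l : ℕ) (g : Matrix (Fin (2 * n)) (Fin (2 * n)) ℂ) : YRing n l →ₐ[ℂ] YRing n l :=
  aeval fun p => ∑ a : Fin (2 * n), C (g a p.1) * X (a, p.2)

/-- The ideal `I_{2n,k}` generated by all `Sp_{2n}`-invariants with zero constant term. -/
def ISp (n k : ℕ) : Ideal (QSp n k) :=
  Ideal.span {f | (∀ g, IsSp n g → actSp n k g 1 f = f) ∧ MvPolynomial.constantCoeff f = 0}

/-- The canonical surjection `𝒫(M_{2n,k}) ⊗ 𝒫(ℂ^{2n})^{⊗ℓ} → (𝒫(M_{2n,k})/I_{2n,k}) ⊗ ⋯`. -/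
def PsiSp (n k l : ℕ) : (QSp n k ⊗[ℂ] YRing n l) →ₐ[ℂ] ((QSp n k ⧸ ISp n k) ⊗[ℂ] YRing n l) :=
  Algebra.TensorProduct.map (Ideal.Quotient.mkₐ ℂ (ISp n k)) (AlgHom.id ℂ (YRing n l))

/-- The `Sp_{2n}` Pieri algebra `𝒜_{n,k,ℓ}`, as the set of elements of
`(𝒫(M_{2n,k})/I_{2n,k}) ⊗ 𝒫(ℂ_1^{2n}) ⊗ ⋯ ⊗ 𝒫(ℂ_ℓ^{2n})` fixed by `U_{Sp_{2n}} × U_k`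
(invariance tested on every representative). -/
def ASpSet (n k l : ℕ) : Set ((QSp n k ⧸ ISp n k) ⊗[ℂ] YRing n l) :=
  {t | ∀ (g : Matrix (Fin (2 * n)) (Fin (2 * n)) ℂ) (h : Matrix (Fin k) (Fin k) ℂ),
      IsSp n g → IsUU g → IsUU h →
      ∀ w : QSp n k ⊗[ℂ] YRing n l, PsiSp n k l w = t →
        PsiSp n k l (Algebra.TensorProduct.map (actSp n k g h) (actY n l g) w) = t}


/-! ### Block for Statement 15 : flat families -/

/-- A flat `ℂ[t]`-algebra with general fibre `𝔄_{n,k,ℓ}` and special fibre `ℂ[Ω(k,ℓ)]`. -/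
structure FlatFam (n k l : ℕ) : Type 1 where
  R : Type
  [cr : CommRing R]
  [algC : Algebra ℂ R]
  [algP : Algebra (Polynomial ℂ) R]
  [tower : IsScalarTower ℂ (Polynomial ℂ) R]
  flat : Module.Flat (Polynomial ℂ) R
  general : ∀ a : ℂ, a ≠ 0 →
    Nonempty ((R ⧸ Ideal.span {algebraMap (Polynomial ℂ) R (Polynomial.X - Polynomial.C a)})
      ≃ₐ[ℂ] invariants n k l)
  special : Nonempty ((R ⧸ Ideal.span {algebraMap (Polynomial ℂ) R Polynomial.X})
      ≃ₐ[ℂ] AddMonoidAlgebra ℂ (OmegaM k l))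

/-! ### Block for Statement 17 : the real cone -/

/-- The elements of `Γ̃(k,ℓ)` as a subtype. -/
abbrev GTElt (k l : ℕ) : Type := ↥(gammaTildeSet k l)

/-- Extension by zero of a function on `Γ̃(k,ℓ)` to the ambient type. -/
def extZ (k l : ℕ) (f : GTElt k l → ℝ) : GammaAmb → ℝ :=
  fun p => if h : p ∈ gammaTildeSet k l then f ⟨p, h⟩ else 0

/-- `P_j(f)` for a real-valued function `f`. -/
def PfunR (k l : ℕ) (f : GammaAmb → ℝ) (j : ℕ) : ℝ :=
  ((∑ a ∈ Finset.Icc 1 (k + j), f (Sum.inl ((j : ℤ), a)))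
      - ∑ b ∈ Finset.Icc 1 (k + j - 1), f (Sum.inl ((j : ℤ) - 1, b)))
    + (∑ a ∈ Finset.Icc 1 k, (f (Sum.inl (-(j : ℤ), a)) - f (Sum.inl (-(j : ℤ) + 1, a))))
    + (∑ a ∈ Finset.Ico 1 j, f (Sum.inr (a, j)))
    + ∑ b ∈ Finset.Icc (j + 1) l, f (Sum.inr (j, b))

/-- The set `𝒞_{F,D,P}` of nonnegative order-preserving real functions on `Γ̃(k,ℓ)`
with `f_{-ℓ} = D`, `f_ℓ = F` and `P(f) = P`. -/
def CsetFDP (k l : ℕ) (D F : ℕ →₀ ℕ) (P : Fin l → ℕ) : Set (GTElt k l → ℝ) :=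
  {f | (∀ a b : GammaAmb, tildeGE k l a b → extZ k l f b ≤ extZ k l f a) ∧
    (∀ p, 0 ≤ f p) ∧
    (∀ a : ℕ, 1 ≤ a → a ≤ k → extZ k l f (Sum.inl (-(l : ℤ), a)) = (D (a - 1) : ℝ)) ∧
    (∀ a : ℕ, 1 ≤ a → a ≤ k + l → extZ k l f (Sum.inl ((l : ℤ), a)) = (F (a - 1) : ℝ)) ∧
    (∀ j : Fin l, PfunR k l (extZ k l f) ((j : ℕ) + 1) = (P j : ℝ))}



/-! ### Auxiliary combinatorics for the proof -/

section Aux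

/-- A filter of a downward-closed predicate on `Ico a b` is an initial segment. -/
lemma prefix_mem_iff {p : ℕ → Prop} [DecidablePred p] {a b : ℕ}
    (hdc : ∀ x y, a ≤ x → x ≤ y → y < b → p y → p x) (x : ℕ) :
    x ∈ (Finset.Ico a b).filter p ↔ a ≤ x ∧ x < a + ((Finset.Ico a b).filter p).card := by
  constructor
  · rintro hx
    rw [Finset.mem_filter, Finset.mem_Ico] at hx
    refine ⟨hx.1.1, ?_⟩
    have hsub : Finset.Ico a (x+1) ⊆ (Finset.Ico a b).filter p := by
      intro y hy
      rw [Finset.mem_Ico] at hy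
      rw [Finset.mem_filter, Finset.mem_Ico]
      exact ⟨⟨hy.1, lt_of_le_of_lt (by omega) hx.1.2⟩, hdc y x hy.1 (by omega) hx.1.2 hx.2⟩
    have := Finset.card_le_card hsub
    rw [Nat.card_Ico] at this
    omega
  · rintro ⟨h1, h2⟩
    by_contra hx
    have hsub : (Finset.Ico a b).filter p ⊆ Finset.Ico a x := by
      intro y hy
      have hy' := hy
      rw [Finset.mem_filter, Finset.mem_Ico] at hy'
      rw [Finset.mem_Ico]
      refine ⟨hy'.1.1, ?_⟩
      by_contra hyx
      exact hx (Finset.mem_filter.mpr ⟨Finset.mem_Ico.mpr ⟨h1, lt_of_le_of_lt (by omega) hy'.1.2⟩,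
        hdc x y h1 (by omega) hy'.1.2 hy'.2⟩)
    have := Finset.card_le_card hsub
    rw [Nat.card_Ico] at this
    omega

lemma ysize_eq_sum {X : ℕ →₀ ℕ} {s : Finset ℕ} (h : X.support ⊆ s) :
    ysize X = ∑ a ∈ s, X a :=
  Finsupp.sum_of_support_subset X h _ (fun _ _ => rfl)

lemma sum_Icc_one (h : ℕ → ℕ) (n : ℕ) :
    ∑ a ∈ Finset.Icc 1 n, h a = ∑ a ∈ Finset.range n, h (a + 1) := by
  induction n with
  | zero => simp
  | succ n ih => rw [Finset.sum_range_succ, ← ih, Finset.sum_Icc_succ_top (by omega)]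

lemma apply_le_ysize {X : ℕ →₀ ℕ} (a : ℕ) : X a ≤ ysize X := by
  by_cases h : a ∈ X.support
  · exact Finset.single_le_sum (f := fun i => X i) (fun _ _ => Nat.zero_le _) h
  · simp [Finsupp.notMem_support_iff.mp h]

end Aux

/-! ### Interlacing chains and their bijection with skew tableaux -/

section Chains

/-- An interlacing chain of Young diagrams from `E` to `F` with size increments `M`. -/
def IsChainOf (E F : ℕ →₀ ℕ) (m : ℕ) (M : Fin m → ℕ) (g : ℕ → ℕ →₀ ℕ) : Prop :=
  g 0 = E ∧ (∀ i, m ≤ i → g i = F) ∧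
  (∀ i, i < m → ∀ j, g i j ≤ g (i+1) j) ∧
  (∀ i, i < m → ∀ j, g (i+1) (j+1) ≤ g i j) ∧
  (∀ i : Fin m, ysize (g ((i : ℕ)+1)) = ysize (g (i : ℕ)) + M i)

variable {E F : ℕ →₀ ℕ} {m : ℕ} {M : Fin m → ℕ} {g : ℕ → ℕ →₀ ℕ} {T : ℕ × ℕ → ℕ}

lemma chain_mono (hg : IsChainOf E F m M g) {i i' : ℕ} (h : i ≤ i') (j : ℕ) :
    g i j ≤ g i' j := by
  induction i' with
  | zero => rw [Nat.le_zero.mp h]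
  | succ n ih =>
    rcases Nat.eq_or_lt_of_le h with rfl | h'
    · exact le_rfl
    rcases Nat.lt_or_ge n m with hn | hn
    · exact le_trans (ih (by omega)) (hg.2.2.1 n hn j)
    · rw [hg.2.1 (n+1) (by omega)]
      rcases Nat.lt_or_ge i m with hi | hi
      · rw [← hg.2.1 n hn]; exact ih (by omega)
      · rw [hg.2.1 i hi]

lemma chain_le_F (hg : IsChainOf E F m M g) (i j : ℕ) : g i j ≤ F j := by
  have h1 : g i j ≤ g (max i m) j := chain_mono hg (le_max_left i m) j
  rwa [hg.2.1 _ (le_max_right i m)] at h1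

lemma E_le_chain (hg : IsChainOf E F m M g) (i j : ℕ) : E j ≤ g i j := by
  have := chain_mono hg (Nat.zero_le i) j
  rwa [hg.1] at this

/-- The tableau attached to a chain. -/
def chainT (E F : ℕ →₀ ℕ) (m : ℕ) (g : ℕ → ℕ →₀ ℕ) : ℕ × ℕ → ℕ := fun c =>
  if E c.1 ≤ c.2 ∧ c.2 < F c.1 then ((Finset.range m).filter (fun r => g r c.1 ≤ c.2)).card
  else 0

/-- The chain attached to a tableau. -/
def tChain (E F : ℕ →₀ ℕ) (T : ℕ × ℕ → ℕ) : ℕ → ℕ →₀ ℕ := fun i =>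
  Finsupp.onFinset (E.support ∪ F.support)
    (fun a => E a + ((Finset.Ico (E a) (F a)).filter (fun j => T (a, j) ≤ i)).card)
    (by
      intro a ha
      by_contra hmem
      simp only [Finset.mem_union, Finsupp.mem_support_iff, not_or, not_not] at hmem
      rw [hmem.1, hmem.2] at ha
      simp at ha)

lemma chainT_char (hg : IsChainOf E F m M g) {a j : ℕ} (hj2 : j < F a)
    {r : ℕ} (hr : r ≤ m) :
    g r a ≤ j ↔ r < ((Finset.range m).filter (fun r => g r a ≤ j)).card := by
  have hcard : ((Finset.range m).filter (fun r => g r a ≤ j)).card ≤ m := by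
    calc ((Finset.range m).filter (fun r => g r a ≤ j)).card ≤ (Finset.range m).card :=
          Finset.card_filter_le _ _
      _ = m := Finset.card_range m
  rcases Nat.eq_or_lt_of_le hr with rfl | hrm
  · have h1 : ¬ g r a ≤ j := by rw [hg.2.1 r le_rfl]; omega
    exact ⟨fun h => absurd h h1, fun h => absurd h (by omega)⟩
  · have key := prefix_mem_iff (p := fun r => g r a ≤ j) (a := 0) (b := m)
      (fun x y _ hxy _ hy => le_trans (chain_mono hg hxy a) hy) r
    rw [← Finset.range_eq_Ico, Finset.mem_filter, Finset.mem_range] at key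
    constructor
    · intro h
      have := key.mp ⟨hrm, h⟩
      omega
    · intro h
      exact (key.mpr ⟨Nat.zero_le _, by omega⟩).2

lemma chain_supp {k : ℕ} (hg : IsChainOf E F m M g) (hE0 : ∀ j, k ≤ j → E j = 0)
    (hF0 : ∀ j, k + m ≤ j → F j = 0) : ∀ i a, k + min i m ≤ a → g i a = 0 := by
  intro i
  induction i with
  | zero =>
    intro a ha
    rw [hg.1]
    have hmin : min 0 m = 0 := Nat.zero_min m
    exact hE0 a (by omega)
  | succ n ih =>
    intro a ha
    rcases Nat.lt_or_ge n m with hn | hn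
    · have h2 : min (n+1) m = n+1 := min_eq_left (by omega)
      rw [h2] at ha
      have hle : g (n+1) a ≤ g n (a-1) := by
        have h3 := hg.2.2.2.1 n hn (a-1)
        rwa [show a - 1 + 1 = a by omega] at h3
      have hmin : min n m = n := min_eq_left (by omega)
      have hz := ih (a-1) (by omega)
      omega
    · rw [hg.2.1 (n+1) (by omega)]
      have hmin : min (n+1) m = m := min_eq_right (by omega)
      exact hF0 a (by omega)

lemma chainT_content (hg : IsChainOf E F m M g) (i : Fin m) :
    {c : ℕ × ℕ | E c.1 ≤ c.2 ∧ c.2 < F c.1 ∧ chainT E F m g c = (i : ℕ) + 1}.ncard = M i := by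
  have him : (i : ℕ) < m := i.isLt
  have hiff : ∀ a j : ℕ, (E a ≤ j ∧ j < F a ∧ chainT E F m g (a, j) = (i : ℕ) + 1)
      ↔ (g (i : ℕ) a ≤ j ∧ j < g ((i : ℕ)+1) a) := by
    intro a j
    constructor
    · rintro ⟨h1, h2, h3⟩
      simp only [chainT] at h3
      rw [if_pos (⟨h1, h2⟩ : E (a, j).1 ≤ (a, j).2 ∧ (a, j).2 < F (a, j).1)] at h3
      refine ⟨(chainT_char hg h2 (by omega)).mpr (by omega), ?_⟩
      by_contra hcon
      push_neg at hcon
      have := (chainT_char hg h2 (by omega)).mp hcon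
      omega
    · rintro ⟨h1, h2⟩
      have hEj : E a ≤ j := le_trans (E_le_chain hg _ a) h1
      have hjF : j < F a := lt_of_lt_of_le h2 (chain_le_F hg _ a)
      refine ⟨hEj, hjF, ?_⟩
      simp only [chainT]
      rw [if_pos (⟨hEj, hjF⟩ : E (a, j).1 ≤ (a, j).2 ∧ (a, j).2 < F (a, j).1)]
      have k1 := (chainT_char hg hjF (show (i : ℕ) ≤ m by omega)).mp h1
      have k3 : ¬ ((i : ℕ) + 1 <
          ((Finset.range m).filter (fun r => g r a ≤ j)).card) := fun hc =>
        absurd ((chainT_char hg hjF (show (i : ℕ) + 1 ≤ m by omega)).mpr hc) (by omega)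
      omega
  have hset : {c : ℕ × ℕ | E c.1 ≤ c.2 ∧ c.2 < F c.1 ∧ chainT E F m g c = (i : ℕ) + 1} =
      ↑(F.support.biUnion (fun a => (Finset.Ico (g (i : ℕ) a) (g ((i : ℕ)+1) a)).map
        ⟨Prod.mk a, fun x y h => by simpa using h⟩)) := by
    ext c
    obtain ⟨a, j⟩ := c
    simp only [Set.mem_setOf_eq, Finset.coe_biUnion, Set.mem_iUnion, Finset.mem_coe,
      Finset.mem_map, Finset.mem_Ico, Function.Embedding.coeFn_mk]
    rw [hiff a j]
    constructor
    · rintro ⟨h1, h2⟩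
      refine ⟨a, ?_, j, ⟨h1, h2⟩, rfl⟩
      have := chain_le_F hg ((i : ℕ)+1) a
      exact Finsupp.mem_support_iff.mpr (by omega)
    · rintro ⟨a', _, j', ⟨h1, h2⟩, heq⟩
      cases heq
      exact ⟨h1, h2⟩
  rw [hset, Set.ncard_coe_finset]
  rw [Finset.card_biUnion (by
    intro a ha b hb hab
    simp only [Function.onFun]
    rw [Finset.disjoint_left]
    intro c hc hc'
    rw [Finset.mem_map] at hc hc'
    obtain ⟨j1, _, rfl⟩ := hc
    obtain ⟨j2, _, heq⟩ := hc'
    exact hab (by cases heq; rfl))]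
  have hcards : ∀ a ∈ F.support,
      ((Finset.Ico (g (i : ℕ) a) (g ((i : ℕ)+1) a)).map
        ⟨Prod.mk a, fun x y h => by simpa using h⟩).card = g ((i : ℕ)+1) a - g (i : ℕ) a :=
    fun a _ => by rw [Finset.card_map, Nat.card_Ico]
  rw [Finset.sum_congr rfl hcards,
    Finset.sum_tsub_distrib _ (fun a _ => hg.2.2.1 (i : ℕ) him a)]
  have hsub : ∀ r : ℕ, (g r).support ⊆ F.support := by
    intro r a ha
    rw [Finsupp.mem_support_iff] at ha ⊢
    have := chain_le_F hg r a
    omega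
  rw [← ysize_eq_sum (hsub ((i : ℕ)+1)), ← ysize_eq_sum (hsub (i : ℕ))]
  have := hg.2.2.2.2 i
  omega

lemma chainT_isSSYT (hg : IsChainOf E F m M g) (hF : IsYoung F) (hm : 0 < m) :
    IsSkewSSYT E F m M (chainT E F m g) := by
  have hEF : ∀ a, E a ≤ F a := fun a => by
    rw [← hg.1]; exact chain_le_F hg 0 a
  refine ⟨hEF, ?_, ?_, ?_, ?_, fun i => chainT_content hg i⟩
  · intro a j h1 h2
    simp only [chainT]
    rw [if_pos (⟨h1, h2⟩ : E (a, j).1 ≤ (a, j).2 ∧ (a, j).2 < F (a, j).1)]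
    constructor
    · refine Finset.card_pos.mpr ⟨0, Finset.mem_filter.mpr ⟨Finset.mem_range.mpr hm, ?_⟩⟩
      rw [hg.1]; exact h1
    · calc ((Finset.range m).filter (fun r => g r a ≤ j)).card ≤ (Finset.range m).card :=
            Finset.card_filter_le _ _
        _ = m := Finset.card_range m
  · intro a j hnot
    simp only [chainT]
    exact if_neg hnot
  · intro a j h1 h2
    simp only [chainT]
    rw [if_pos (⟨h1, show j < F a by omega⟩ : E (a, j).1 ≤ (a, j).2 ∧ (a, j).2 < F (a, j).1),
      if_pos (⟨show E a ≤ j + 1 by omega, h2⟩ :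
        E (a, j+1).1 ≤ (a, j+1).2 ∧ (a, j+1).2 < F (a, j+1).1)]
    apply Finset.card_le_card
    intro r hr
    rw [Finset.mem_filter] at hr ⊢
    exact ⟨hr.1, by omega⟩
  · intro a j h1 h2 h3 h4
    simp only [chainT]
    rw [if_pos (⟨h1, h2⟩ : E (a, j).1 ≤ (a, j).2 ∧ (a, j).2 < F (a, j).1),
      if_pos (⟨h3, h4⟩ : E (a+1, j).1 ≤ (a+1, j).2 ∧ (a+1, j).2 < F (a+1, j).1)]
    set s1 := ((Finset.range m).filter (fun r => g r a ≤ j)).card with hs1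
    have hs1pos : 1 ≤ s1 := by
      refine Finset.card_pos.mpr ⟨0, Finset.mem_filter.mpr ⟨Finset.mem_range.mpr hm, ?_⟩⟩
      rw [hg.1]; exact h1
    have hs1le : s1 ≤ m := by
      calc s1 ≤ (Finset.range m).card := Finset.card_filter_le _ _
        _ = m := Finset.card_range m
    have hga : g (s1 - 1) a ≤ j := (chainT_char hg h2 (by omega)).mpr (by omega)
    have hstep : g (s1 - 1 + 1) (a + 1) ≤ g (s1 - 1) a := hg.2.2.2.1 (s1 - 1) (by omega) a
    have hs : s1 - 1 + 1 = s1 := by omega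
    rw [hs] at hstep
    exact (chainT_char hg h4 hs1le).mp (le_trans hstep hga)

lemma T_row_mono (hT : IsSkewSSYT E F m M T) {a x y : ℕ} (h1 : E a ≤ x) (h2 : x ≤ y)
    (h3 : y < F a) : T (a, x) ≤ T (a, y) := by
  induction y, h2 using Nat.le_induction with
  | base => exact le_rfl
  | succ n hn ih =>
    exact le_trans (ih (by omega)) (hT.2.2.2.1 a n (le_trans h1 hn) h3)

lemma tChain_apply (i a : ℕ) : tChain E F T i a =
    E a + ((Finset.Ico (E a) (F a)).filter (fun j => T (a, j) ≤ i)).card := rfl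

lemma tChain_char (hT : IsSkewSSYT E F m M T) {a j i : ℕ} (hj1 : E a ≤ j) (hj2 : j < F a) :
    T (a, j) ≤ i ↔ j < tChain E F T i a := by
  have key := prefix_mem_iff (p := fun j => T (a, j) ≤ i) (a := E a) (b := F a)
    (fun x y hx hxy hy hpy => le_trans (T_row_mono hT hx hxy hy) hpy) j
  rw [Finset.mem_filter, Finset.mem_Ico] at key
  rw [tChain_apply]
  constructor
  · intro h
    exact (key.mp ⟨⟨hj1, hj2⟩, h⟩).2
  · intro h
    exact (key.mpr ⟨hj1, h⟩).2

lemma tChain_isChain (hE : IsYoung E) (hF : IsYoung F)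
    (hT : IsSkewSSYT E F m M T) : IsChainOf E F m M (tChain E F T) := by
  refine ⟨?_, ?_, ?_, ?_, ?_⟩
  · ext a
    rw [tChain_apply]
    rw [Finset.filter_eq_empty_iff.mpr (by
      intro j hj
      rw [Finset.mem_Ico] at hj
      have := (hT.2.1 a j hj.1 hj.2).1
      omega)]
    simp
  · intro i hi
    ext a
    rw [tChain_apply]
    rw [Finset.filter_eq_self.mpr (by
      intro j hj
      rw [Finset.mem_Ico] at hj
      have := (hT.2.1 a j hj.1 hj.2).2
      omega), Nat.card_Ico]
    have := hT.1 a
    omega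
  · intro i _ a
    rw [tChain_apply, tChain_apply]
    have hsub2 : (Finset.Ico (E a) (F a)).filter (fun j => T (a, j) ≤ i) ⊆
        (Finset.Ico (E a) (F a)).filter (fun j => T (a, j) ≤ i+1) := by
      intro j hj
      rw [Finset.mem_filter] at hj ⊢
      exact ⟨hj.1, by omega⟩
    have := Finset.card_le_card hsub2
    omega
  · intro i _ a
    rw [tChain_apply, tChain_apply]
    set c2 := ((Finset.Ico (E (a+1)) (F (a+1))).filter (fun j => T (a+1, j) ≤ i+1)).card with hc2
    rcases Nat.eq_zero_or_pos c2 with h0 | hpos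
    · rw [h0]
      have := hE a
      omega
    · have hmem := (prefix_mem_iff (p := fun j => T (a+1, j) ≤ i+1) (a := E (a+1))
        (b := F (a+1))
        (fun x y hx hxy hy hpy => le_trans (T_row_mono hT hx hxy hy) hpy)
        (E (a+1) + c2 - 1)).mpr ⟨by omega, by omega⟩
      rw [Finset.mem_filter, Finset.mem_Ico] at hmem
      obtain ⟨⟨hj1, hj2⟩, hj3⟩ := hmem
      rcases Nat.lt_or_ge (E (a+1) + c2 - 1) (E a) with hlt | hge
      · omega
      · have hFa : E (a+1) + c2 - 1 < F a := lt_of_lt_of_le hj2 (hF a)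
        have hcs := hT.2.2.2.2.1 a (E (a+1) + c2 - 1) hge hFa hj1 hj2
        have hTle : T (a, E (a+1) + c2 - 1) ≤ i := by omega
        have := (tChain_char hT hge hFa).mp hTle
        rw [tChain_apply] at this
        omega
  · intro i
    have him : (i : ℕ) < m := i.isLt
    set s := E.support ∪ F.support with hs
    have hsub : ∀ r : ℕ, (tChain E F T r).support ⊆ s :=
      fun r => Finsupp.support_onFinset_subset
    have hysize : ∀ r : ℕ, ysize (tChain E F T r) = ∑ a ∈ s, tChain E F T r a :=
      fun r => ysize_eq_sum (hsub r)
    have hsplit : ∀ a : ℕ,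
        tChain E F T ((i : ℕ)+1) a = tChain E F T (i : ℕ) a +
          ((Finset.Ico (E a) (F a)).filter (fun j => T (a, j) = (i : ℕ)+1)).card := by
      intro a
      rw [tChain_apply, tChain_apply]
      have hor : (Finset.Ico (E a) (F a)).filter (fun j => T (a, j) ≤ (i : ℕ)+1) =
          ((Finset.Ico (E a) (F a)).filter (fun j => T (a, j) ≤ (i : ℕ))) ∪
          ((Finset.Ico (E a) (F a)).filter (fun j => T (a, j) = (i : ℕ)+1)) := by
        rw [← Finset.filter_or]
        apply Finset.filter_congr
        intro j _
        constructor
        · intro h; omega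
        · intro h; omega
      rw [hor, Finset.card_union_of_disjoint (by
        rw [Finset.disjoint_left]
        intro j hj hj'
        rw [Finset.mem_filter] at hj hj'
        omega)]
      omega
    have hcontent := hT.2.2.2.2.2 i
    have hsetc : {c : ℕ × ℕ | E c.1 ≤ c.2 ∧ c.2 < F c.1 ∧ T c = (i : ℕ) + 1} =
        ↑(s.biUnion (fun a => ((Finset.Ico (E a) (F a)).filter
          (fun j => T (a, j) = (i : ℕ)+1)).map ⟨Prod.mk a, fun x y h => by simpa using h⟩)) := by
      ext c
      obtain ⟨a, j⟩ := c
      simp only [Set.mem_setOf_eq, Finset.coe_biUnion, Set.mem_iUnion, Finset.mem_coe,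
        Finset.mem_map, Finset.mem_filter, Finset.mem_Ico, Function.Embedding.coeFn_mk]
      constructor
      · rintro ⟨h1, h2, h3⟩
        refine ⟨a, ?_, j, ⟨⟨h1, h2⟩, h3⟩, rfl⟩
        rw [hs, Finset.mem_union]
        exact Or.inr (Finsupp.mem_support_iff.mpr (by omega))
      · rintro ⟨a', _, j', ⟨⟨h1, h2⟩, h3⟩, heq⟩
        cases heq
        exact ⟨h1, h2, h3⟩
    rw [hsetc, Set.ncard_coe_finset] at hcontent
    rw [Finset.card_biUnion (by
      intro a ha b hb hab
      simp only [Function.onFun]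
      rw [Finset.disjoint_left]
      intro c hc hc'
      rw [Finset.mem_map] at hc hc'
      obtain ⟨j1, _, rfl⟩ := hc
      obtain ⟨j2, _, heq⟩ := hc'
      exact hab (by cases heq; rfl))] at hcontent
    rw [hysize, hysize, ← hcontent, Finset.sum_congr rfl (fun a _ => hsplit a),
      Finset.sum_add_distrib]
    congr 1
    exact Finset.sum_congr rfl (fun a _ => by rw [Finset.card_map])

lemma tChain_chainT (hg : IsChainOf E F m M g) : tChain E F (chainT E F m g) = g := by
  funext i
  ext a
  rw [tChain_apply]
  rcases le_or_gt i m with him | him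
  · have hfil : ((Finset.Ico (E a) (F a)).filter (fun j => chainT E F m g (a, j) ≤ i)) =
        Finset.Ico (E a) (g i a) := by
      ext j
      simp only [Finset.mem_filter, Finset.mem_Ico]
      constructor
      · rintro ⟨⟨hj1, hj2⟩, hj3⟩
        refine ⟨hj1, ?_⟩
        by_contra hcon
        push_neg at hcon
        have := (chainT_char hg hj2 him).mp hcon
        simp only [chainT] at hj3
        rw [if_pos (⟨hj1, hj2⟩ : E (a, j).1 ≤ (a, j).2 ∧ (a, j).2 < F (a, j).1)] at hj3
        omega
      · rintro ⟨hj1, hj2⟩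
        have hj2F : j < F a := lt_of_lt_of_le hj2 (chain_le_F hg i a)
        refine ⟨⟨hj1, hj2F⟩, ?_⟩
        simp only [chainT]
        rw [if_pos (⟨hj1, hj2F⟩ : E (a, j).1 ≤ (a, j).2 ∧ (a, j).2 < F (a, j).1)]
        have hnot : ¬ (g i a ≤ j) := by omega
        have : ¬ (i < ((Finset.range m).filter (fun r => g r a ≤ j)).card) :=
          fun hc => hnot ((chainT_char hg hj2F him).mpr hc)
        omega
    rw [hfil, Nat.card_Ico]
    have := E_le_chain hg i a
    omega
  · have hgi : g i = F := hg.2.1 i (by omega)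
    rw [Finset.filter_eq_self.mpr (by
      intro j hj
      rw [Finset.mem_Ico] at hj
      simp only [chainT]
      rw [if_pos (⟨hj.1, hj.2⟩ : E (a, j).1 ≤ (a, j).2 ∧ (a, j).2 < F (a, j).1)]
      have : ((Finset.range m).filter (fun r => g r a ≤ j)).card ≤ m :=
        le_trans (Finset.card_filter_le _ _) (le_of_eq (Finset.card_range m))
      omega), Nat.card_Ico, hgi]
    have hEa : E a ≤ F a := by
      rw [← hg.1]
      exact chain_le_F hg 0 a
    omega

lemma chainT_tChain (hT : IsSkewSSYT E F m M T) : chainT E F m (tChain E F T) = T := by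
  funext c
  obtain ⟨a, j⟩ := c
  by_cases hbox : E a ≤ j ∧ j < F a
  · simp only [chainT]
    rw [if_pos (⟨hbox.1, hbox.2⟩ : E (a, j).1 ≤ (a, j).2 ∧ (a, j).2 < F (a, j).1)]
    have hchar : ∀ r : ℕ, tChain E F T r a ≤ j ↔ r < T (a, j) := by
      intro r
      constructor
      · intro h
        by_contra hcon
        push_neg at hcon
        have := (tChain_char hT hbox.1 hbox.2).mp hcon
        omega
      · intro h
        by_contra hcon
        push_neg at hcon
        have := (tChain_char (i := r) hT hbox.1 hbox.2).mpr hcon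
        omega
    have hTm : T (a, j) ≤ m := (hT.2.1 a j hbox.1 hbox.2).2
    have hfil : (Finset.range m).filter (fun r => tChain E F T r a ≤ j) =
        Finset.range (T (a, j)) := by
      ext r
      simp only [Finset.mem_filter, Finset.mem_range]
      rw [hchar r]
      omega
    rw [hfil, Finset.card_range]
  · simp only [chainT]
    rw [if_neg hbox]
    exact (hT.2.2.1 a j hbox).symm

theorem kostka_eq_chain (hE : IsYoung E) (hF : IsYoung F) (hm : 0 < m) :
    kostka E F m M = {g : ℕ → ℕ →₀ ℕ | IsChainOf E F m M g}.ncard := by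
  rw [kostka]
  have himg : {T : ℕ × ℕ → ℕ | IsSkewSSYT E F m M T} =
      (fun g => chainT E F m g) '' {g | IsChainOf E F m M g} := by
    ext T
    constructor
    · intro hT
      exact ⟨tChain E F T, tChain_isChain hE hF hT, chainT_tChain hT⟩
    · rintro ⟨g, hg, rfl⟩
      exact chainT_isSSYT hg hF hm
  rw [himg, Set.ncard_image_of_injOn]
  intro g1 h1 g2 h2 heq
  have heq' : chainT E F m g1 = chainT E F m g2 := heq
  calc g1 = tChain E F (chainT E F m g1) := (tChain_chainT h1).symm
    _ = tChain E F (chainT E F m g2) := by rw [heq']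
    _ = g2 := tChain_chainT h2

end Chains

/-! ### Basic properties of `Ω(k,ℓ)` -/

section OmegaBasics

variable {k l : ℕ} {f : GammaAmb → ℕ}

lemma mem_omega_iff : f ∈ Omega k l ↔
    ((∀ a b, gammaStep k l a b → f (Sum.inl b) ≤ f (Sum.inl a)) ∧
     ∀ p, p ∉ gammaTildeSet k l → f p = 0) := by
  have hdef : f ∈ Omega k l ↔
      ((∀ a b, tildeGE k l a b → f b ≤ f a) ∧
        ∀ p, p ∉ gammaTildeSet k l → f p = 0) := Iff.rfl
  rw [hdef]
  constructor
  · rintro ⟨h1, h2⟩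
    exact ⟨fun a b hab =>
      h1 _ _ (Or.inl ⟨a, b, rfl, rfl, Relation.ReflTransGen.single hab⟩), h2⟩
  · rintro ⟨h1, h2⟩
    refine ⟨?_, h2⟩
    rintro x y (⟨p, q, rfl, rfl, hpq⟩ | rfl)
    · induction hpq with
      | refl => exact le_rfl
      | tail _ hbc ih => exact le_trans (h1 _ _ hbc) ih
    · exact le_rfl

lemma omega_vanish (hf : f ∈ Omega k l) {i : ℤ} {a : ℕ}
    (h : ¬ (-(l : ℤ) ≤ i ∧ i ≤ (l : ℤ) ∧ 1 ≤ a ∧ (a : ℤ) ≤ (k : ℤ) + max 0 i)) :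
    f (Sum.inl (i, a)) = 0 := by
  refine (mem_omega_iff.mp hf).2 _ ?_
  rintro (⟨p, hp, hpe⟩ | ⟨p, hp, hpe⟩)
  · cases hpe
    exact h hp
  · exact absurd hpe (by simp)

lemma omega_vanish_eps (hf : f ∈ Omega k l) {p : ℕ × ℕ} (h : p ∉ epsSet l) :
    f (Sum.inr p) = 0 := by
  refine (mem_omega_iff.mp hf).2 _ ?_
  rintro (⟨q, hq, hqe⟩ | ⟨q, hq, hqe⟩)
  · exact absurd hqe (by simp)
  · cases hqe
    exact h hq

lemma vanish_nonneg (hf : f ∈ Omega k l) {i a : ℕ} (h : a = 0 ∨ k + i < a) :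
    f (Sum.inl ((i : ℤ), a)) = 0 := by
  refine omega_vanish hf ?_
  rintro ⟨c1, c2, c3, c4⟩
  rw [max_eq_right (by positivity : (0 : ℤ) ≤ (i : ℤ))] at c4
  omega

lemma vanish_neg (hf : f ∈ Omega k l) {i a : ℕ} (h : a = 0 ∨ k < a) :
    f (Sum.inl (-(i : ℤ), a)) = 0 := by
  refine omega_vanish hf ?_
  rintro ⟨c1, c2, c3, c4⟩
  rw [max_eq_left (by omega : -(i : ℤ) ≤ 0)] at c4
  omega

lemma vanish_big (hf : f ∈ Omega k l) {i : ℤ} {a : ℕ} (h : (l : ℤ) < i ∨ i < -(l : ℤ)) :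
    f (Sum.inl (i, a)) = 0 := omega_vanish hf (by omega)

lemma step_up (hf : f ∈ Omega k l) {i : ℕ} (hi : i < l) (a : ℕ) :
    f (Sum.inl ((i : ℤ), a)) ≤ f (Sum.inl ((i : ℤ) + 1, a)) := by
  by_cases hc : 1 ≤ a ∧ a ≤ k + i
  · exact (mem_omega_iff.mp hf).1 _ _ (Or.inl ⟨i, a, hi, hc.1, hc.2, rfl, rfl⟩)
  · rw [vanish_nonneg hf (by omega)]
    exact Nat.zero_le _

lemma mono_up (hf : f ∈ Omega k l) {i i' : ℕ} (hi : i ≤ i') (hi' : i' ≤ l) (a : ℕ) :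
    f (Sum.inl ((i : ℤ), a)) ≤ f (Sum.inl ((i' : ℤ), a)) := by
  induction i' with
  | zero => rw [Nat.le_zero.mp hi]
  | succ n ih =>
    have hcast : ((n + 1 : ℕ) : ℤ) = (n : ℤ) + 1 := by push_cast; ring
    rw [hcast]
    rcases Nat.eq_or_lt_of_le hi with rfl | h'
    · rw [← hcast]
    · exact le_trans (ih (by omega) (by omega)) (step_up hf (by omega) a)

lemma step_diag (hf : f ∈ Omega k l) {i : ℕ} (hi : i < l) {a : ℕ} (ha : 1 ≤ a) :
    f (Sum.inl ((i : ℤ) + 1, a + 1)) ≤ f (Sum.inl ((i : ℤ), a)) := by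
  by_cases hc : a ≤ k + i
  · exact (mem_omega_iff.mp hf).1 _ _ (Or.inr (Or.inl ⟨i, a, hi, ha, hc, rfl, rfl⟩))
  · have hcast : ((i : ℤ) + 1) = ((i + 1 : ℕ) : ℤ) := by push_cast; ring
    rw [hcast, vanish_nonneg hf (by omega)]
    exact Nat.zero_le _

lemma step_dn (hf : f ∈ Omega k l) {i : ℕ} (hi : i < l) (a : ℕ) :
    f (Sum.inl (-(i : ℤ), a)) ≤ f (Sum.inl (-(i : ℤ) - 1, a)) := by
  by_cases hc : 1 ≤ a ∧ a ≤ k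
  · exact (mem_omega_iff.mp hf).1 _ _ (Or.inr (Or.inr (Or.inl ⟨i, a, hi, hc.1, hc.2, rfl, rfl⟩)))
  · rw [vanish_neg hf (by omega)]
    exact Nat.zero_le _

lemma mono_dn (hf : f ∈ Omega k l) {i i' : ℕ} (hi : i ≤ i') (hi' : i' ≤ l) (a : ℕ) :
    f (Sum.inl (-(i : ℤ), a)) ≤ f (Sum.inl (-(i' : ℤ), a)) := by
  induction i' with
  | zero => rw [Nat.le_zero.mp hi]
  | succ n ih =>
    have hcast : -((n + 1 : ℕ) : ℤ) = -(n : ℤ) - 1 := by push_cast; ring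
    rw [hcast]
    rcases Nat.eq_or_lt_of_le hi with rfl | h'
    · rw [← hcast]
    · exact le_trans (ih (by omega) (by omega)) (step_dn hf (by omega) a)

lemma step_diag_neg (hf : f ∈ Omega k l) {i : ℕ} (hi : i < l) {a : ℕ} (ha : 1 ≤ a) :
    f (Sum.inl (-(i : ℤ) - 1, a + 1)) ≤ f (Sum.inl (-(i : ℤ), a)) := by
  by_cases hc : a + 1 ≤ k
  · exact (mem_omega_iff.mp hf).1 _ _ (Or.inr (Or.inr (Or.inr ⟨i, a, hi, ha, hc, rfl, rfl⟩)))
  · have hcast : -(i : ℤ) - 1 = -((i + 1 : ℕ) : ℤ) := by push_cast; ring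
    rw [hcast, vanish_neg hf (by omega)]
    exact Nat.zero_le _

lemma row_dec (hf : f ∈ Omega k l) {i : ℕ} (hi : i < l) {a : ℕ} (ha : 1 ≤ a) :
    f (Sum.inl ((i : ℤ), a + 1)) ≤ f (Sum.inl ((i : ℤ), a)) :=
  le_trans (step_up hf hi (a + 1)) (step_diag hf hi ha)

lemma row_dec_neg (hf : f ∈ Omega k l) {i : ℕ} (hi : i < l) {a : ℕ} (ha : 1 ≤ a) :
    f (Sum.inl (-(i : ℤ), a + 1)) ≤ f (Sum.inl (-(i : ℤ), a)) :=
  le_trans (step_dn hf hi (a + 1)) (step_diag_neg hf hi ha)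

end OmegaBasics

/-! ### Rows of an element of `Ω(k,ℓ)` -/

section Rows

variable (k l : ℕ)

/-- Row `i` (`0 ≤ i`) of `f`, as a finitely supported function (0-indexed). -/
def rowP (f : GammaAmb → ℕ) (i : ℕ) : ℕ →₀ ℕ :=
  Finsupp.onFinset (Finset.range (k + l))
    (fun a => if a < k + l then f (Sum.inl ((i : ℤ), a + 1)) else 0)
    (by
      intro a ha
      rw [Finset.mem_range]
      by_contra hcon
      rw [if_neg hcon] at ha
      exact ha rfl)

/-- Row `-i` (`0 ≤ i`) of `f`, as a finitely supported function (0-indexed). -/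
def rowN (f : GammaAmb → ℕ) (i : ℕ) : ℕ →₀ ℕ :=
  Finsupp.onFinset (Finset.range (k + l))
    (fun a => if a < k + l then f (Sum.inl (-(i : ℤ), a + 1)) else 0)
    (by
      intro a ha
      rw [Finset.mem_range]
      by_contra hcon
      rw [if_neg hcon] at ha
      exact ha rfl)

variable {k l : ℕ} {f : GammaAmb → ℕ}

lemma rowP_support (f : GammaAmb → ℕ) (i : ℕ) :
    (rowP k l f i).support ⊆ Finset.range (k + l) := Finsupp.support_onFinset_subset

lemma rowN_support (f : GammaAmb → ℕ) (i : ℕ) :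
    (rowN k l f i).support ⊆ Finset.range (k + l) := Finsupp.support_onFinset_subset

lemma rowP_apply (hf : f ∈ Omega k l) {i : ℕ} (hil : i ≤ l) (a : ℕ) :
    rowP k l f i a = f (Sum.inl ((i : ℤ), a + 1)) := by
  simp only [rowP, Finsupp.onFinset_apply]
  split_ifs with h
  · rfl
  · exact (vanish_nonneg hf (by omega)).symm

lemma rowN_apply (hf : f ∈ Omega k l) {i : ℕ} (hil : i ≤ l) (a : ℕ) :
    rowN k l f i a = f (Sum.inl (-(i : ℤ), a + 1)) := by
  simp only [rowN, Finsupp.onFinset_apply]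
  split_ifs with h
  · rfl
  · exact (vanish_neg hf (by omega)).symm

lemma sum_row_pos (hf : f ∈ Omega k l) {j : ℕ} (hj : j ≤ l) :
    ∑ a ∈ Finset.Icc 1 (k + j), f (Sum.inl ((j : ℤ), a)) = ysize (rowP k l f j) := by
  rw [ysize_eq_sum (rowP_support f j),
    Finset.sum_congr rfl (fun a _ => rowP_apply hf hj a), sum_Icc_one]
  apply Finset.sum_subset (Finset.range_subset_range.mpr (by omega))
  intro a _ hna
  rw [Finset.mem_range] at hna
  exact vanish_nonneg hf (by omega)

lemma sum_row_neg (hf : f ∈ Omega k l) {j : ℕ} (hj : j ≤ l) :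
    ∑ a ∈ Finset.Icc 1 k, f (Sum.inl (-(j : ℤ), a)) = ysize (rowN k l f j) := by
  rw [ysize_eq_sum (rowN_support f j),
    Finset.sum_congr rfl (fun a _ => rowN_apply hf hj a), sum_Icc_one]
  apply Finset.sum_subset (Finset.range_subset_range.mpr (by omega))
  intro a _ hna
  rw [Finset.mem_range] at hna
  exact vanish_neg hf (by omega)

lemma Afun_eq (hf : f ∈ Omega k l) {j : ℕ} (hj1 : 1 ≤ j) (hj2 : j ≤ l) :
    Afun k f j = (ysize (rowP k l f j) : ℤ) - (ysize (rowP k l f (j - 1)) : ℤ) := by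
  rw [Afun]
  have e1 : ∑ a ∈ Finset.Icc 1 (k + j), fval f (j : ℤ) a =
      ((∑ a ∈ Finset.Icc 1 (k + j), f (Sum.inl ((j : ℤ), a)) : ℕ) : ℤ) := by
    rw [Nat.cast_sum]
    rfl
  have hc : ((j : ℤ) - 1) = ((j - 1 : ℕ) : ℤ) := by omega
  have hc2 : k + j - 1 = k + (j - 1) := by omega
  have e2 : ∑ b ∈ Finset.Icc 1 (k + j - 1), fval f ((j : ℤ) - 1) b =
      ((∑ a ∈ Finset.Icc 1 (k + (j - 1)), f (Sum.inl (((j - 1 : ℕ) : ℤ), a)) : ℕ) : ℤ) := by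
    rw [hc2, Nat.cast_sum]
    rw [Finset.sum_congr rfl (fun a _ => by rw [fval, hc])]
  rw [e1, e2, sum_row_pos hf hj2, sum_row_pos hf (by omega)]

lemma Bfun_eq (hf : f ∈ Omega k l) {j : ℕ} (hj1 : 1 ≤ j) (hj2 : j ≤ l) :
    Bfun k f j = (ysize (rowN k l f j) : ℤ) - (ysize (rowN k l f (j - 1)) : ℤ) := by
  rw [Bfun, Finset.sum_sub_distrib]
  have e1 : ∑ a ∈ Finset.Icc 1 k, fval f (-(j : ℤ)) a =
      ((∑ a ∈ Finset.Icc 1 k, f (Sum.inl (-(j : ℤ), a)) : ℕ) : ℤ) := by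
    rw [Nat.cast_sum]
    rfl
  have hc : (-(j : ℤ) + 1) = -((j - 1 : ℕ) : ℤ) := by omega
  have e2 : ∑ a ∈ Finset.Icc 1 k, fval f (-(j : ℤ) + 1) a =
      ((∑ a ∈ Finset.Icc 1 k, f (Sum.inl (-((j - 1 : ℕ) : ℤ), a)) : ℕ) : ℤ) := by
    rw [Nat.cast_sum]
    rw [Finset.sum_congr rfl (fun a _ => by rw [fval, hc])]
  rw [e1, e2, sum_row_neg hf hj2, sum_row_neg hf (by omega)]

lemma rowP_mono (hf : f ∈ Omega k l) {i i' : ℕ} (hi : i ≤ i') (hi' : i' ≤ l) (a : ℕ) :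
    rowP k l f i a ≤ rowP k l f i' a := by
  rw [rowP_apply hf (by omega) a, rowP_apply hf hi' a]
  exact mono_up hf hi hi' (a + 1)

lemma rowN_mono (hf : f ∈ Omega k l) {i i' : ℕ} (hi : i ≤ i') (hi' : i' ≤ l) (a : ℕ) :
    rowN k l f i a ≤ rowN k l f i' a := by
  rw [rowN_apply hf (by omega) a, rowN_apply hf hi' a]
  exact mono_dn hf hi hi' (a + 1)

lemma ysize_rowP_mono (hf : f ∈ Omega k l) {i i' : ℕ} (hi : i ≤ i') (hi' : i' ≤ l) :
    ysize (rowP k l f i) ≤ ysize (rowP k l f i') := by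
  rw [ysize_eq_sum (rowP_support f i), ysize_eq_sum (rowP_support f i')]
  exact Finset.sum_le_sum (fun a _ => rowP_mono hf hi hi' a)

lemma ysize_rowN_mono (hf : f ∈ Omega k l) {i i' : ℕ} (hi : i ≤ i') (hi' : i' ≤ l) :
    ysize (rowN k l f i) ≤ ysize (rowN k l f i') := by
  rw [ysize_eq_sum (rowN_support f i), ysize_eq_sum (rowN_support f i')]
  exact Finset.sum_le_sum (fun a _ => rowN_mono hf hi hi' a)

lemma Pfun_eq_Scomb (hf : f ∈ Omega k l) (j : Fin l) :
    Pfun k l f ((j : ℕ) + 1) =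
      (Scomb l (fun i => ysize (rowP k l f ((i : ℕ) + 1)) - ysize (rowP k l f (i : ℕ)))
        (fun i => ysize (rowN k l f ((i : ℕ) + 1)) - ysize (rowN k l f (i : ℕ)))
        (fun p => f (Sum.inr p)) j : ℤ) := by
  have hjl : (j : ℕ) + 1 ≤ l := j.isLt
  have hA := ysize_rowP_mono hf (by omega : (j : ℕ) ≤ (j : ℕ) + 1) hjl
  have hB := ysize_rowN_mono hf (by omega : (j : ℕ) ≤ (j : ℕ) + 1) hjl
  rw [Pfun, Afun_eq hf (by omega) hjl, Bfun_eq hf (by omega) hjl, Scomb]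
  have h1 : (j : ℕ) + 1 - 1 = (j : ℕ) := by omega
  rw [h1]
  have h2 : (j : ℕ) + 1 + 1 = (j : ℕ) + 2 := by omega
  rw [h2]
  push_cast [Nat.cast_sub hA, Nat.cast_sub hB]
  omega

end Rows

/-! ### The bijection between `Ω_{F,D,P}` and tuples of chains -/

section Bij

abbrev TupT (l : ℕ) : Type :=
  (ℕ →₀ ℕ) × (Fin l → ℕ) × (Fin l → ℕ) × (ℕ × ℕ → ℕ) × (ℕ → ℕ →₀ ℕ) × (ℕ → ℕ →₀ ℕ)

def condQ (k l : ℕ) (P : Fin l → ℕ) (E : ℕ →₀ ℕ) (A B : Fin l → ℕ) (C : ℕ × ℕ → ℕ) : Prop :=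
  IsYoung E ∧ (∀ i, k ≤ i → E i = 0) ∧ (∀ p, p ∉ epsSet l → C p = 0) ∧ Scomb l A B C = P

def S2 (k l : ℕ) (D F : ℕ →₀ ℕ) (P : Fin l → ℕ) : Set (TupT l) :=
  {x | condQ k l P x.1 x.2.1 x.2.2.1 x.2.2.2.1 ∧
    IsChainOf x.1 F l x.2.1 x.2.2.2.2.1 ∧ IsChainOf x.1 D l x.2.2.1 x.2.2.2.2.2}

def PhiF (k l : ℕ) (f : GammaAmb → ℕ) : TupT l :=
  (rowP k l f 0,
   fun i => ysize (rowP k l f ((i : ℕ) + 1)) - ysize (rowP k l f (i : ℕ)),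
   fun i => ysize (rowN k l f ((i : ℕ) + 1)) - ysize (rowN k l f (i : ℕ)),
   fun p => f (Sum.inr p),
   fun i => rowP k l f (min i l),
   fun i => rowN k l f (min i l))

def PsiF (l : ℕ) (x : TupT l) : GammaAmb → ℕ := fun p =>
  match p with
  | Sum.inl (i, a) =>
      if 1 ≤ a ∧ 0 ≤ i ∧ i ≤ (l : ℤ) then x.2.2.2.2.1 i.toNat (a - 1)
      else if 1 ≤ a ∧ -(l : ℤ) ≤ i ∧ i < 0 then x.2.2.2.2.2 (-i).toNat (a - 1)
      else 0
  | Sum.inr p => x.2.2.2.1 p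

variable {k l : ℕ} {D F : ℕ →₀ ℕ} {P : Fin l → ℕ} {f : GammaAmb → ℕ} {x : TupT l}

lemma inl_mem_tilde {q : ℤ × ℕ} : Sum.inl q ∈ gammaTildeSet k l ↔ q ∈ gammaSet k l := by
  simp [gammaTildeSet]

lemma inr_mem_tilde {q : ℕ × ℕ} : Sum.inr q ∈ gammaTildeSet k l ↔ q ∈ epsSet l := by
  simp [gammaTildeSet]

lemma mem_OmegaFDP_iff : f ∈ OmegaFDP k l D F P ↔ f ∈ Omega k l ∧
    (∀ a : ℕ, 1 ≤ a → a ≤ k → f (Sum.inl (-(l : ℤ), a)) = D (a - 1)) ∧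
    (∀ a : ℕ, 1 ≤ a → a ≤ k + l → f (Sum.inl ((l : ℤ), a)) = F (a - 1)) ∧
    (∀ j : Fin l, Pfun k l f ((j : ℕ) + 1) = (P j : ℤ)) := Iff.rfl

lemma rowN_zero_eq_rowP_zero (hf : f ∈ Omega k l) : rowN k l f 0 = rowP k l f 0 := by
  ext a
  rw [rowN_apply hf (Nat.zero_le l) a, rowP_apply hf (Nat.zero_le l) a]
  norm_num

lemma rowP_top (hf : f ∈ OmegaFDP k l D F P) (hrF : ∀ i, k + l ≤ i → F i = 0) :
    rowP k l f l = F := by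
  ext a
  rw [rowP_apply hf.1 le_rfl a]
  rcases Nat.lt_or_ge a (k + l) with h | h
  · have hb := hf.2.2.1 (a + 1) (by omega) (by omega)
    rw [Nat.add_sub_cancel] at hb
    exact hb
  · rw [vanish_nonneg hf.1 (by omega), hrF a (by omega)]

lemma rowN_top (hf : f ∈ OmegaFDP k l D F P) (hrD : ∀ i, k ≤ i → D i = 0) :
    rowN k l f l = D := by
  ext a
  rw [rowN_apply hf.1 le_rfl a]
  rcases Nat.lt_or_ge a k with h | h
  · have hb := hf.2.1 (a + 1) (by omega) (by omega)
    rw [Nat.add_sub_cancel] at hb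
    exact hb
  · rw [vanish_neg hf.1 (by omega), hrD a (by omega)]

lemma phiF_mem (hl : 0 < l) (hrD : ∀ i, k ≤ i → D i = 0) (hrF : ∀ i, k + l ≤ i → F i = 0)
    (hf : f ∈ OmegaFDP k l D F P) : PhiF k l f ∈ S2 k l D F P := by
  have hfo : f ∈ Omega k l := hf.1
  refine ⟨⟨?_, ?_, ?_, ?_⟩, ⟨?_, ?_, ?_, ?_, ?_⟩, ⟨?_, ?_, ?_, ?_, ?_⟩⟩
  · intro a
    show rowP k l f 0 (a + 1) ≤ rowP k l f 0 a
    rw [rowP_apply hfo (Nat.zero_le l) (a + 1), rowP_apply hfo (Nat.zero_le l) a]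
    exact row_dec hfo hl (by omega)
  · intro i hi
    show rowP k l f 0 i = 0
    rw [rowP_apply hfo (Nat.zero_le l) i]
    exact vanish_nonneg hfo (by omega)
  · intro p hp
    exact omega_vanish_eps hfo hp
  · funext j
    have h := hf.2.2.2 j
    rw [Pfun_eq_Scomb hfo j] at h
    exact Nat.cast_inj.mp h
  · show rowP k l f (min 0 l) = rowP k l f 0
    rw [Nat.zero_min]
  · intro i hi
    show rowP k l f (min i l) = F
    rw [min_eq_right hi]
    exact rowP_top hf hrF
  · intro i hi a
    show rowP k l f (min i l) a ≤ rowP k l f (min (i + 1) l) a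
    rw [min_eq_left (by omega), min_eq_left (by omega)]
    exact rowP_mono hfo (by omega) (by omega) a
  · intro i hi a
    show rowP k l f (min (i + 1) l) (a + 1) ≤ rowP k l f (min i l) a
    rw [min_eq_left (by omega), min_eq_left (by omega),
      rowP_apply hfo (by omega) (a + 1), rowP_apply hfo (by omega) a]
    have hc : ((i + 1 : ℕ) : ℤ) = (i : ℤ) + 1 := by push_cast; ring
    rw [hc]
    exact step_diag hfo hi (by omega)
  · intro i
    show ysize (rowP k l f (min ((i : ℕ) + 1) l)) = ysize (rowP k l f (min (i : ℕ) l)) +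
      (ysize (rowP k l f ((i : ℕ) + 1)) - ysize (rowP k l f (i : ℕ)))
    have hil : (i : ℕ) + 1 ≤ l := i.isLt
    rw [min_eq_left hil, min_eq_left (by omega)]
    have := ysize_rowP_mono hfo (by omega : (i : ℕ) ≤ (i : ℕ) + 1) hil
    omega
  · show rowN k l f (min 0 l) = rowP k l f 0
    rw [Nat.zero_min]
    exact rowN_zero_eq_rowP_zero hfo
  · intro i hi
    show rowN k l f (min i l) = D
    rw [min_eq_right hi]
    exact rowN_top hf hrD
  · intro i hi a
    show rowN k l f (min i l) a ≤ rowN k l f (min (i + 1) l) a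
    rw [min_eq_left (by omega), min_eq_left (by omega)]
    exact rowN_mono hfo (by omega) (by omega) a
  · intro i hi a
    show rowN k l f (min (i + 1) l) (a + 1) ≤ rowN k l f (min i l) a
    rw [min_eq_left (by omega), min_eq_left (by omega),
      rowN_apply hfo (by omega) (a + 1), rowN_apply hfo (by omega) a]
    have hc : -((i + 1 : ℕ) : ℤ) = -(i : ℤ) - 1 := by push_cast; ring
    rw [hc]
    exact step_diag_neg hfo hi (by omega)
  · intro i
    show ysize (rowN k l f (min ((i : ℕ) + 1) l)) = ysize (rowN k l f (min (i : ℕ) l)) +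
      (ysize (rowN k l f ((i : ℕ) + 1)) - ysize (rowN k l f (i : ℕ)))
    have hil : (i : ℕ) + 1 ≤ l := i.isLt
    rw [min_eq_left hil, min_eq_left (by omega)]
    have := ysize_rowN_mono hfo (by omega : (i : ℕ) ≤ (i : ℕ) + 1) hil
    omega

lemma psiF_pos (x : TupT l) {i : ℕ} (hil : i ≤ l) {a : ℕ} (ha : 1 ≤ a) :
    PsiF l x (Sum.inl ((i : ℤ), a)) = x.2.2.2.2.1 i (a - 1) := by
  show (if 1 ≤ a ∧ 0 ≤ (i : ℤ) ∧ (i : ℤ) ≤ (l : ℤ) then x.2.2.2.2.1 (i : ℤ).toNat (a - 1)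
      else if 1 ≤ a ∧ -(l : ℤ) ≤ (i : ℤ) ∧ (i : ℤ) < 0 then
        x.2.2.2.2.2 (-(i : ℤ)).toNat (a - 1) else 0) = x.2.2.2.2.1 i (a - 1)
  rw [if_pos ⟨ha, by omega, by omega⟩, show ((i : ℤ)).toNat = i by omega]

lemma psiF_neg (hx : x ∈ S2 k l D F P) {i : ℕ} (hil : i ≤ l) {a : ℕ} (ha : 1 ≤ a) :
    PsiF l x (Sum.inl (-(i : ℤ), a)) = x.2.2.2.2.2 i (a - 1) := by
  show (if 1 ≤ a ∧ 0 ≤ -(i : ℤ) ∧ -(i : ℤ) ≤ (l : ℤ) then x.2.2.2.2.1 (-(i : ℤ)).toNat (a - 1)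
      else if 1 ≤ a ∧ -(l : ℤ) ≤ -(i : ℤ) ∧ -(i : ℤ) < 0 then
        x.2.2.2.2.2 (- -(i : ℤ)).toNat (a - 1) else 0) = x.2.2.2.2.2 i (a - 1)
  rcases Nat.eq_zero_or_pos i with rfl | hi
  · rw [if_pos ⟨ha, by omega, by omega⟩]
    rw [show (-((0 : ℕ) : ℤ)).toNat = 0 by omega]
    rw [hx.2.1.1, hx.2.2.1]
  · rw [if_neg (by rintro ⟨c1, c2, c3⟩; omega), if_pos ⟨ha, by omega, by omega⟩,
      show (- -(i : ℤ)).toNat = i by omega]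

lemma psiF_out (x : TupT l) {i : ℤ} {a : ℕ} (h : a = 0 ∨ (l : ℤ) < i ∨ i < -(l : ℤ)) :
    PsiF l x (Sum.inl (i, a)) = 0 := by
  show (if 1 ≤ a ∧ 0 ≤ i ∧ i ≤ (l : ℤ) then x.2.2.2.2.1 i.toNat (a - 1)
      else if 1 ≤ a ∧ -(l : ℤ) ≤ i ∧ i < 0 then x.2.2.2.2.2 (-i).toNat (a - 1) else 0) = 0
  rw [if_neg (by rintro ⟨c1, c2, c3⟩; omega), if_neg (by rintro ⟨c1, c2, c3⟩; omega)]

lemma psiF_inr (p : ℕ × ℕ) : PsiF l x (Sum.inr p) = x.2.2.2.1 p := rfl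

lemma psiF_mem_omega (hrD : ∀ i, k ≤ i → D i = 0) (hrF : ∀ i, k + l ≤ i → F i = 0)
    (hx : x ∈ S2 k l D F P) : PsiF l x ∈ Omega k l := by
  rw [mem_omega_iff]
  constructor
  · rintro a b (⟨i, j, hi, hj1, hj2, rfl, rfl⟩ | ⟨i, j, hi, hj1, hj2, rfl, rfl⟩ |
      ⟨i, j, hi, hj1, hj2, rfl, rfl⟩ | ⟨i, j, hi, hj1, hj2, rfl, rfl⟩)
    · rw [psiF_pos x (by omega) hj1]
      rw [show ((i : ℤ) + 1) = ((i + 1 : ℕ) : ℤ) by push_cast; ring,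
        psiF_pos x (by omega) hj1]
      exact hx.2.1.2.2.1 i hi (j - 1)
    · rw [show ((i : ℤ) + 1) = ((i + 1 : ℕ) : ℤ) by push_cast; ring,
        psiF_pos x (by omega) (by omega : 1 ≤ j + 1), psiF_pos x (by omega) hj1]
      rw [show j + 1 - 1 = (j - 1) + 1 by omega]
      exact hx.2.1.2.2.2.1 i hi (j - 1)
    · rw [psiF_neg hx (by omega) hj1]
      rw [show (-(i : ℤ) - 1) = -((i + 1 : ℕ) : ℤ) by push_cast; ring,
        psiF_neg hx (by omega) hj1]
      exact hx.2.2.2.2.1 i hi (j - 1)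
    · rw [show (-(i : ℤ) - 1) = -((i + 1 : ℕ) : ℤ) by push_cast; ring,
        psiF_neg hx (by omega) (by omega : 1 ≤ j + 1), psiF_neg hx (by omega) hj1]
      rw [show j + 1 - 1 = (j - 1) + 1 by omega]
      exact hx.2.2.2.2.2.1 i hi (j - 1)
  · intro p hp
    match p with
    | Sum.inl (i, a) =>
      rw [inl_mem_tilde] at hp
      show (if 1 ≤ a ∧ 0 ≤ i ∧ i ≤ (l : ℤ) then x.2.2.2.2.1 i.toNat (a - 1)
        else if 1 ≤ a ∧ -(l : ℤ) ≤ i ∧ i < 0 then x.2.2.2.2.2 (-i).toNat (a - 1) else 0) = 0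
      split_ifs with h1 h2
      · have hm : max 0 i = i := max_eq_right h1.2.1
        have hcond : (k : ℤ) + (i : ℤ).toNat < a := by
          by_contra hcon
          exact hp ⟨by omega, h1.2.2, h1.1, by rw [hm]; omega⟩
        apply chain_supp hx.2.1 hx.1.2.1 hrF (i : ℤ).toNat (a - 1)
        have : (i : ℤ).toNat ≤ l := by omega
        rw [min_eq_left this]
        omega
      · have hm : max 0 i = 0 := max_eq_left (by omega)
        have hcond : (k : ℤ) < a := by
          by_contra hcon
          exact hp ⟨h2.2.1, by omega, h2.1, by rw [hm]; omega⟩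
        have hle := chain_le_F hx.2.2 (-i).toNat (a - 1)
        rw [hrD (a - 1) (by omega)] at hle
        omega
      · rfl
    | Sum.inr q =>
      rw [inr_mem_tilde] at hp
      exact hx.1.2.2.1 q hp

lemma rowP_psiF (hΩ : PsiF l x ∈ Omega k l) {i : ℕ} (hil : i ≤ l) :
    rowP k l (PsiF l x) i = x.2.2.2.2.1 i := by
  ext a
  rw [rowP_apply hΩ hil a, psiF_pos x hil (by omega : 1 ≤ a + 1), Nat.add_sub_cancel]

lemma rowN_psiF (hx : x ∈ S2 k l D F P) (hΩ : PsiF l x ∈ Omega k l) {i : ℕ} (hil : i ≤ l) :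
    rowN k l (PsiF l x) i = x.2.2.2.2.2 i := by
  ext a
  rw [rowN_apply hΩ hil a, psiF_neg hx hil (by omega : 1 ≤ a + 1), Nat.add_sub_cancel]

lemma psiF_mem (hrD : ∀ i, k ≤ i → D i = 0) (hrF : ∀ i, k + l ≤ i → F i = 0)
    (hx : x ∈ S2 k l D F P) : PsiF l x ∈ OmegaFDP k l D F P := by
  have hΩ := psiF_mem_omega hrD hrF hx
  refine ⟨hΩ, ?_, ?_, ?_⟩
  · intro a ha hak
    rw [psiF_neg hx le_rfl ha, hx.2.2.2.1 l le_rfl]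
  · intro a ha hak
    rw [psiF_pos x le_rfl ha, hx.2.1.2.1 l le_rfl]
  · intro j
    rw [Pfun_eq_Scomb hΩ j]
    have hA : (fun i : Fin l => ysize (rowP k l (PsiF l x) ((i : ℕ) + 1)) -
        ysize (rowP k l (PsiF l x) (i : ℕ))) = x.2.1 := by
      funext i
      rw [rowP_psiF hΩ (by omega : (i : ℕ) + 1 ≤ l), rowP_psiF hΩ (by omega)]
      have := hx.2.1.2.2.2.2 i
      omega
    have hB : (fun i : Fin l => ysize (rowN k l (PsiF l x) ((i : ℕ) + 1)) -
        ysize (rowN k l (PsiF l x) (i : ℕ))) = x.2.2.1 := by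
      funext i
      rw [rowN_psiF hx hΩ (by omega : (i : ℕ) + 1 ≤ l), rowN_psiF hx hΩ (by omega)]
      have := hx.2.2.2.2.2.2 i
      omega
    have hC : (fun p => PsiF l x (Sum.inr p)) = x.2.2.2.1 := rfl
    rw [hA, hB, hC, hx.1.2.2.2]

lemma phiF_psiF (hrD : ∀ i, k ≤ i → D i = 0) (hrF : ∀ i, k + l ≤ i → F i = 0)
    (hx : x ∈ S2 k l D F P) : PhiF k l (PsiF l x) = x := by
  have hΩ := psiF_mem_omega hrD hrF hx
  refine Prod.ext ?_ (Prod.ext ?_ (Prod.ext ?_ (Prod.ext ?_ (Prod.ext ?_ ?_))))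
  · show rowP k l (PsiF l x) 0 = x.1
    rw [rowP_psiF hΩ (Nat.zero_le l)]
    exact hx.2.1.1
  · funext i
    show ysize (rowP k l (PsiF l x) ((i : ℕ) + 1)) - ysize (rowP k l (PsiF l x) (i : ℕ)) =
      x.2.1 i
    rw [rowP_psiF hΩ (by omega : (i : ℕ) + 1 ≤ l), rowP_psiF hΩ (by omega)]
    have := hx.2.1.2.2.2.2 i
    omega
  · funext i
    show ysize (rowN k l (PsiF l x) ((i : ℕ) + 1)) - ysize (rowN k l (PsiF l x) (i : ℕ)) =
      x.2.2.1 i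
    rw [rowN_psiF hx hΩ (by omega : (i : ℕ) + 1 ≤ l), rowN_psiF hx hΩ (by omega)]
    have := hx.2.2.2.2.2.2 i
    omega
  · rfl
  · funext i
    show rowP k l (PsiF l x) (min i l) = x.2.2.2.2.1 i
    rw [rowP_psiF hΩ (min_le_right i l)]
    rcases le_or_gt i l with h | h
    · rw [min_eq_left h]
    · rw [min_eq_right (by omega), hx.2.1.2.1 l le_rfl, hx.2.1.2.1 i (by omega)]
  · funext i
    show rowN k l (PsiF l x) (min i l) = x.2.2.2.2.2 i
    rw [rowN_psiF hx hΩ (min_le_right i l)]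
    rcases le_or_gt i l with h | h
    · rw [min_eq_left h]
    · rw [min_eq_right (by omega), hx.2.2.2.1 l le_rfl, hx.2.2.2.1 i (by omega)]

lemma psiF_phiF (hl : 0 < l) (hrD : ∀ i, k ≤ i → D i = 0) (hrF : ∀ i, k + l ≤ i → F i = 0)
    (hf : f ∈ OmegaFDP k l D F P) : PsiF l (PhiF k l f) = f := by
  have hx := phiF_mem hl hrD hrF hf
  funext p
  match p with
  | Sum.inl (i, a) =>
    rcases Nat.eq_zero_or_pos a with rfl | ha
    · rw [psiF_out _ (Or.inl rfl)]
      exact (omega_vanish hf.1 (by rintro ⟨c1, c2, c3, c4⟩; omega)).symm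
    · rcases le_or_gt 0 i with hi | hi
      · rcases le_or_gt i (l : ℤ) with hil | hil
        · have hc : i = ((i.toNat : ℕ) : ℤ) := by omega
          rw [hc, psiF_pos _ (by omega) ha]
          show rowP k l f (min i.toNat l) (a - 1) = _
          rw [min_eq_left (by omega), rowP_apply hf.1 (by omega) (a - 1),
            show a - 1 + 1 = a by omega]
        · rw [psiF_out _ (Or.inr (Or.inl hil))]
          exact (vanish_big hf.1 (Or.inl hil)).symm
      · rcases le_or_gt (-(l : ℤ)) i with hil | hil
        · have hc : i = -(((-i).toNat : ℕ) : ℤ) := by omega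
          rw [hc, psiF_neg hx (by omega) ha]
          show rowN k l f (min (-i).toNat l) (a - 1) = _
          rw [min_eq_left (by omega), rowN_apply hf.1 (by omega) (a - 1),
            show a - 1 + 1 = a by omega]
        · rw [psiF_out _ (Or.inr (Or.inr hil))]
          exact (vanish_big hf.1 (Or.inr hil)).symm
  | Sum.inr q => rfl

lemma bijOn_phiF (hl : 0 < l) (hrD : ∀ i, k ≤ i → D i = 0)
    (hrF : ∀ i, k + l ≤ i → F i = 0) :
    Set.BijOn (PhiF k l) (OmegaFDP k l D F P) (S2 k l D F P) :=
  ⟨fun _ hf => phiF_mem hl hrD hrF hf,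
   fun f1 h1 f2 h2 heq => by
     rw [← psiF_phiF hl hrD hrF h1, ← psiF_phiF hl hrD hrF h2, heq],
   fun x hx => ⟨PsiF l x, psiF_mem hrD hrF hx, phiF_psiF hrD hrF hx⟩⟩

end Bij

/-! ### Finiteness of `Ω_{F,D,P}` -/

section Finite

variable {k l : ℕ} {D F : ℕ →₀ ℕ} {P : Fin l → ℕ} {f : GammaAmb → ℕ}

lemma gammaTilde_finite : (gammaTildeSet k l).Finite := by
  apply Set.Finite.union
  · apply Set.Finite.image
    apply Set.Finite.subset
      ((Set.finite_Icc (-(l : ℤ)) (l : ℤ)).prod (Set.finite_Icc 0 (k + l)))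
    rintro ⟨i, a⟩ ⟨h1, h2, h3, h4⟩
    have hm : max 0 i ≤ (l : ℤ) := max_le (by positivity) h2
    exact ⟨Set.mem_Icc.mpr ⟨h1, h2⟩, Set.mem_Icc.mpr ⟨Nat.zero_le _, by omega⟩⟩
  · apply Set.Finite.image
    apply Set.Finite.subset ((Set.finite_Icc 1 l).prod (Set.finite_Icc 0 l))
    rintro ⟨s, t⟩ ⟨h1, h2, h3⟩
    exact ⟨Set.mem_Icc.mpr ⟨h1, by omega⟩, Set.mem_Icc.mpr ⟨Nat.zero_le _, h3⟩⟩

lemma f_le_top (hf : f ∈ OmegaFDP k l D F P) :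
    ∀ p, f p ≤ ysize F + ysize D + ∑ j, P j := by
  have hfo : f ∈ Omega k l := hf.1
  intro p
  match p with
  | Sum.inl (i, a) =>
    rcases le_or_gt 0 i with hi | hi
    · rcases le_or_gt i (l : ℤ) with hil | hil
      · have h1 : f (Sum.inl (i, a)) ≤ f (Sum.inl ((l : ℤ), a)) := by
          rw [show i = ((i.toNat : ℕ) : ℤ) by omega]
          exact mono_up hfo (show i.toNat ≤ l by omega) le_rfl a
        have h2 : f (Sum.inl ((l : ℤ), a)) ≤ ysize F := by
          rcases Nat.eq_zero_or_pos a with rfl | ha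
          · rw [omega_vanish hfo (by rintro ⟨c1, c2, c3, c4⟩; omega)]
            exact Nat.zero_le _
          · rcases le_or_gt a (k + l) with hak | hak
            · rw [hf.2.2.1 a ha hak]
              exact apply_le_ysize _
            · rw [vanish_nonneg hfo (Or.inr (by omega))]
              exact Nat.zero_le _
        omega
      · rw [vanish_big hfo (Or.inl hil)]
        exact Nat.zero_le _
    · rcases le_or_gt (-(l : ℤ)) i with hil | hil
      · have h1 : f (Sum.inl (i, a)) ≤ f (Sum.inl (-(l : ℤ), a)) := by
          rw [show i = -(((-i).toNat : ℕ) : ℤ) by omega]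
          exact mono_dn hfo (show (-i).toNat ≤ l by omega) le_rfl a
        have h2 : f (Sum.inl (-(l : ℤ), a)) ≤ ysize D := by
          rcases Nat.eq_zero_or_pos a with rfl | ha
          · rw [vanish_neg hfo (Or.inl rfl)]
            exact Nat.zero_le _
          · rcases le_or_gt a k with hak | hak
            · rw [hf.2.1 a ha hak]
              exact apply_le_ysize _
            · rw [vanish_neg hfo (Or.inr hak)]
              exact Nat.zero_le _
        omega
      · rw [vanish_big hfo (Or.inr hil)]
        exact Nat.zero_le _
  | Sum.inr q =>
    obtain ⟨s, t⟩ := q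
    by_cases hq : (s, t) ∈ epsSet l
    · obtain ⟨h1', h2', h3'⟩ := hq
      have h1 : 1 ≤ s := h1'
      have h2 : s < t := h2'
      have h3 : t ≤ l := h3'
      have hP : Pfun k l f (t - 1 + 1) = (P ⟨t - 1, by omega⟩ : ℤ) :=
        hf.2.2.2 ⟨t - 1, by omega⟩
      rw [show t - 1 + 1 = t by omega, Pfun] at hP
      have hA : 0 ≤ Afun k f t := by
        rw [Afun_eq hfo (by omega) h3]
        have := ysize_rowP_mono hfo (show t - 1 ≤ t by omega) h3
        omega
      have hB : 0 ≤ Bfun k f t := by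
        rw [Bfun_eq hfo (by omega) h3]
        have := ysize_rowN_mono hfo (show t - 1 ≤ t by omega) h3
        omega
      have hterm : (f (Sum.inr (s, t)) : ℤ) ≤
          ∑ a ∈ Finset.Ico 1 t, (f (Sum.inr (a, t)) : ℤ) :=
        Finset.single_le_sum (f := fun a => (f (Sum.inr (a, t)) : ℤ))
          (fun i _ => by positivity) (Finset.mem_Ico.mpr ⟨h1, h2⟩)
      have hs2 : 0 ≤ ∑ b ∈ Finset.Icc (t + 1) l, (f (Sum.inr (t, b)) : ℤ) :=
        Finset.sum_nonneg (fun i _ => by positivity)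
      have hPle : P ⟨t - 1, by omega⟩ ≤ ∑ j, P j :=
        Finset.single_le_sum (f := fun j => P j) (fun i _ => Nat.zero_le _) (Finset.mem_univ _)
      omega
    · rw [omega_vanish_eps hfo hq]
      exact Nat.zero_le _

lemma omegaFDP_finite : (OmegaFDP k l D F P).Finite := by
  have hG : (gammaTildeSet k l).Finite := gammaTilde_finite
  set N := ysize F + ysize D + ∑ j, P j with hN
  apply Set.Finite.of_finite_image
    (f := fun (f : GammaAmb → ℕ) (p : {p // p ∈ hG.toFinset}) => (⟨min (f p.1) N, by omega⟩ :
      Fin (N + 1)))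
  · exact Set.toFinite _
  · intro f1 h1 f2 h2 heq
    funext p
    by_cases hp : p ∈ gammaTildeSet k l
    · have hm : p ∈ hG.toFinset := hG.mem_toFinset.mpr hp
      have hval := congrFun heq ⟨p, hm⟩
      have hb1 := f_le_top h1 p
      have hb2 := f_le_top h2 p
      simp only [Fin.mk.injEq] at hval
      omega
    · rw [(mem_omega_iff.mp h1.1).2 p hp, (mem_omega_iff.mp h2.1).2 p hp]

end Finite

/-! ### Counting -/

section Count

variable {k l : ℕ} {D F : ℕ →₀ ℕ} {P : Fin l → ℕ}

abbrev IdxT (l : ℕ) : Type :=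
  (ℕ →₀ ℕ) × (Fin l → ℕ) × (Fin l → ℕ) × (ℕ × ℕ → ℕ)

def piQ {l : ℕ} (x : TupT l) : IdxT l := (x.1, x.2.1, x.2.2.1, x.2.2.2.1)

def hFun (k l : ℕ) (D F : ℕ →₀ ℕ) (P : Fin l → ℕ) (q : IdxT l) : ℕ :=
  if IsYoung q.1 ∧ (∀ i, k ≤ i → q.1 i = 0) ∧ (∀ p, p ∉ epsSet l → q.2.2.2 p = 0) ∧
      Scomb l q.2.1 q.2.2.1 q.2.2.2 = P
  then kostka q.1 F l q.2.1 * kostka q.1 D l q.2.2.1 else 0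

lemma ncard_prod'' {α β : Type} (s : Set α) (t : Set β) :
    (s ×ˢ t).ncard = s.ncard * t.ncard := by
  rw [← Nat.card_coe_set_eq, ← Nat.card_coe_set_eq, ← Nat.card_coe_set_eq,
    ← Nat.card_prod]
  exact Nat.card_congr (Equiv.Set.prod s t)

lemma hFun_ne {q : IdxT l} (hne : hFun k l D F P q ≠ 0) :
    condQ k l P q.1 q.2.1 q.2.2.1 q.2.2.2 ∧ kostka q.1 F l q.2.1 ≠ 0 ∧
      kostka q.1 D l q.2.2.1 ≠ 0 := by
  rw [hFun] at hne
  split_ifs at hne with hc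
  · exact ⟨hc, fun h => hne (by rw [h, zero_mul]), fun h => hne (by rw [h, mul_zero])⟩
  · exact absurd rfl hne

lemma E_le_of_kostka {E G : ℕ →₀ ℕ} {m : ℕ} {M : Fin m → ℕ} (h : kostka E G m M ≠ 0) :
    E ≤ G := by
  rw [kostka] at h
  obtain ⟨T, hT⟩ := Set.nonempty_of_ncard_ne_zero h
  exact Finsupp.le_def.mpr hT.1

lemma C_bound {A B : Fin l → ℕ} {C : ℕ × ℕ → ℕ} (hv : ∀ p, p ∉ epsSet l → C p = 0)
    (hs : Scomb l A B C = P) (p : ℕ × ℕ) : C p ≤ ∑ j, P j := by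
  by_cases hp : p ∈ epsSet l
  · obtain ⟨s, t⟩ := p
    obtain ⟨h1', h2', h3'⟩ := hp
    have h1 : 1 ≤ s := h1'
    have h2 : s < t := h2'
    have h3 : t ≤ l := h3'
    set i0 : Fin l := ⟨t - 1, by omega⟩ with hi0
    have hsc := congrFun hs i0
    simp only [Scomb] at hsc
    rw [show t - 1 + 1 = t by omega] at hsc
    have hterm : C (s, t) ≤ ∑ s' ∈ Finset.Ico 1 t, C (s', t) :=
      Finset.single_le_sum (f := fun s' => C (s', t)) (fun _ _ => Nat.zero_le _)
        (Finset.mem_Ico.mpr ⟨h1, h2⟩)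
    have hPle : P i0 ≤ ∑ j, P j :=
      Finset.single_le_sum (f := fun j => P j) (fun _ _ => Nat.zero_le _) (Finset.mem_univ _)
    omega
  · rw [hv p hp]
    exact Nat.zero_le _

lemma fiber_eq (q : IdxT l) (hq : condQ k l P q.1 q.2.1 q.2.2.1 q.2.2.2) :
    {x : TupT l | x ∈ S2 k l D F P ∧ piQ x = q} =
      (fun gg : (ℕ → ℕ →₀ ℕ) × (ℕ → ℕ →₀ ℕ) =>
        ((q.1, q.2.1, q.2.2.1, q.2.2.2, gg.1, gg.2) : TupT l)) ''
        ({g | IsChainOf q.1 F l q.2.1 g} ×ˢ {g | IsChainOf q.1 D l q.2.2.1 g}) := by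
  ext x
  simp only [Set.mem_setOf_eq, Set.mem_image, Set.mem_prod]
  constructor
  · rintro ⟨hxS, hpi⟩
    subst hpi
    exact ⟨(x.2.2.2.2.1, x.2.2.2.2.2), ⟨hxS.2.1, hxS.2.2⟩, rfl⟩
  · rintro ⟨⟨g1, g2⟩, ⟨hg1, hg2⟩, rfl⟩
    exact ⟨⟨hq, hg1, hg2⟩, rfl⟩

lemma fiber_card (hl : 0 < l) (hD : IsYoung D) (hF : IsYoung F) (q : IdxT l)
    (hq : condQ k l P q.1 q.2.1 q.2.2.1 q.2.2.2) :
    {x : TupT l | x ∈ S2 k l D F P ∧ piQ x = q}.ncard =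
      kostka q.1 F l q.2.1 * kostka q.1 D l q.2.2.1 := by
  have hinj : Function.Injective (fun gg : (ℕ → ℕ →₀ ℕ) × (ℕ → ℕ →₀ ℕ) =>
      ((q.1, q.2.1, q.2.2.1, q.2.2.2, gg.1, gg.2) : TupT l)) := by
    intro a b hab
    have h5 : a.1 = b.1 := congrArg (fun y : TupT l => y.2.2.2.2.1) hab
    have h6 : a.2 = b.2 := congrArg (fun y : TupT l => y.2.2.2.2.2) hab
    exact Prod.ext h5 h6
  rw [fiber_eq q hq, Set.ncard_image_of_injective _ hinj, ncard_prod'',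
    ← kostka_eq_chain hq.1 hF hl, ← kostka_eq_chain hq.1 hD hl]

lemma exists_of_kostka (hl : 0 < l) (hD : IsYoung D) (hF : IsYoung F) (q : IdxT l)
    (hq : condQ k l P q.1 q.2.1 q.2.2.1 q.2.2.2)
    (hk : kostka q.1 F l q.2.1 * kostka q.1 D l q.2.2.1 ≠ 0) :
    ∃ x ∈ S2 k l D F P, piQ x = q := by
  have h1 : {g : ℕ → ℕ →₀ ℕ | IsChainOf q.1 F l q.2.1 g}.Nonempty := by
    apply Set.nonempty_of_ncard_ne_zero
    rw [← kostka_eq_chain hq.1 hF hl]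
    exact fun h0 => hk (by rw [h0, zero_mul])
  have h2 : {g : ℕ → ℕ →₀ ℕ | IsChainOf q.1 D l q.2.2.1 g}.Nonempty := by
    apply Set.nonempty_of_ncard_ne_zero
    rw [← kostka_eq_chain hq.1 hD hl]
    exact fun h0 => hk (by rw [h0, mul_zero])
  obtain ⟨g1, hg1⟩ := h1
  obtain ⟨g2, hg2⟩ := h2
  exact ⟨(q.1, q.2.1, q.2.2.1, q.2.2.2, g1, g2), ⟨hq, hg1, hg2⟩, rfl⟩

end Count

theorem statement_3 (k l : ℕ) (hk : 0 < k) (hl : 0 < l)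
    (D F : ℕ →₀ ℕ) (hD : IsYoung D) (hF : IsYoung F)
    (hrD : ∀ i, k ≤ i → D i = 0) (hrF : ∀ i, k + l ≤ i → F i = 0) (P : Fin l → ℕ) :
    (OmegaFDP k l D F P).Finite ∧
    (OmegaFDP k l D F P).ncard =
      ∑ᶠ (E : ℕ →₀ ℕ) (A : Fin l → ℕ) (B : Fin l → ℕ) (C : ℕ × ℕ → ℕ),
        (if IsYoung E ∧ (∀ i, k ≤ i → E i = 0) ∧ (∀ p, p ∉ epsSet l → C p = 0) ∧
            Scomb l A B C = P
         then kostka E F l A * kostka E D l B else 0) := by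
  classical
  have hfin : (OmegaFDP k l D F P).Finite := omegaFDP_finite
  refine ⟨hfin, ?_⟩
  have hbij : Set.BijOn (PhiF k l) (OmegaFDP k l D F P) (S2 k l D F P) :=
    bijOn_phiF hl hrD hrF
  have himg : S2 k l D F P = PhiF k l '' OmegaFDP k l D F P := hbij.image_eq.symm
  have hfin2 : (S2 k l D F P).Finite := by
    rw [himg]
    exact hfin.image _
  have h1 : (OmegaFDP k l D F P).ncard = (S2 k l D F P).ncard := by
    rw [himg, Set.ncard_image_of_injOn hbij.injOn]
  set TF := hfin2.toFinset with hTF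
  have h2 : (S2 k l D F P).ncard = TF.card := Set.ncard_eq_toFinset_card _ hfin2
  have h3 : TF.card = ∑ q ∈ TF.image piQ, (TF.filter (fun x => piQ x = q)).card :=
    Finset.card_eq_sum_card_image piQ TF
  have h4 : ∀ q ∈ TF.image piQ, (TF.filter (fun x => piQ x = q)).card = hFun k l D F P q := by
    intro q hq
    obtain ⟨x, hx, rfl⟩ := Finset.mem_image.mp hq
    have hxS : x ∈ S2 k l D F P := hfin2.mem_toFinset.mp hx
    have hcond : condQ k l P (piQ x).1 (piQ x).2.1 (piQ x).2.2.1 (piQ x).2.2.2 := hxS.1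
    have hcf : (TF.filter (fun y => piQ y = piQ x)).card =
        {y : TupT l | y ∈ S2 k l D F P ∧ piQ y = piQ x}.ncard := by
      rw [← Set.ncard_coe_finset]
      congr 1
      ext y
      simp only [Finset.coe_filter, Set.mem_setOf_eq, hTF, Set.Finite.mem_toFinset]
    rw [hcf, fiber_card hl hD hF _ hcond]
    exact (if_pos hcond).symm
  set NC := ∑ j, P j with hNC
  set epsF : Finset (ℕ × ℕ) := (Finset.range (l + 1) ×ˢ Finset.range (l + 1)).filter
    (fun p => 1 ≤ p.1 ∧ p.1 < p.2 ∧ p.2 ≤ l) with hepsF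
  have hepsF_iff : ∀ p : ℕ × ℕ, p ∈ epsF ↔ p ∈ epsSet l := by
    intro p
    rw [hepsF, Finset.mem_filter, Finset.mem_product, Finset.mem_range, Finset.mem_range]
    constructor
    · rintro ⟨_, h⟩
      exact h
    · rintro ⟨ha, hb, hc⟩
      exact ⟨⟨by omega, by omega⟩, ha, hb, hc⟩
  set CF : Finset (ℕ × ℕ → ℕ) := (epsF.pi (fun _ => Finset.range (NC + 1))).image
    (fun φ p => if hp : p ∈ epsF then φ p hp else 0) with hCF
  have hCmem : ∀ C0 : ℕ × ℕ → ℕ, (∀ p, p ∉ epsSet l → C0 p = 0) → (∀ p, C0 p ≤ NC) →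
      C0 ∈ CF := by
    intro C0 hv hb
    rw [hCF, Finset.mem_image]
    refine ⟨fun p _ => C0 p, Finset.mem_pi.mpr (fun p hp => Finset.mem_range.mpr (by
      have := hb p
      omega)), ?_⟩
    funext p
    split_ifs with hp
    · rfl
    · exact (hv p (fun hmem => hp ((hepsF_iff p).mpr hmem))).symm
  set Qbig : Finset (IdxT l) := Finset.Iic D ×ˢ Finset.Iic P ×ˢ Finset.Iic P ×ˢ CF with hQbig
  have h5 : TF.image piQ ⊆ Qbig := by
    intro q hq
    obtain ⟨x, hx, rfl⟩ := Finset.mem_image.mp hq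
    have hxS : x ∈ S2 k l D F P := hfin2.mem_toFinset.mp hx
    have hcond := hxS.1
    rw [hQbig]
    refine Finset.mem_product.mpr ⟨?_, Finset.mem_product.mpr ⟨?_,
      Finset.mem_product.mpr ⟨?_, ?_⟩⟩⟩
    · rw [Finset.mem_Iic]
      refine Finsupp.le_def.mpr (fun a => ?_)
      show x.1 a ≤ D a
      have hcf := chain_le_F hxS.2.2 0 a
      rwa [hxS.2.2.1] at hcf
    · rw [Finset.mem_Iic]
      refine Pi.le_def.mpr (fun i => ?_)
      show x.2.1 i ≤ P i
      have hsc := congrFun hcond.2.2.2 i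
      simp only [Scomb] at hsc
      omega
    · rw [Finset.mem_Iic]
      refine Pi.le_def.mpr (fun i => ?_)
      show x.2.2.1 i ≤ P i
      have hsc := congrFun hcond.2.2.2 i
      simp only [Scomb] at hsc
      omega
    · exact hCmem _ hcond.2.2.1 (C_bound hcond.2.2.1 hcond.2.2.2)
  have h6 : ∀ q ∈ Qbig, q ∉ TF.image piQ → hFun k l D F P q = 0 := by
    intro q _ hq
    by_contra hne
    obtain ⟨hc, hk1, hk2⟩ := hFun_ne hne
    obtain ⟨x, hxS, hpi⟩ := exists_of_kostka hl hD hF q hc (by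
      intro h0
      rcases Nat.mul_eq_zero.mp h0 with h | h
      · exact hk1 h
      · exact hk2 h)
    exact hq (Finset.mem_image.mpr ⟨x, hfin2.mem_toFinset.mpr hxS, hpi⟩)
  have h7 : (OmegaFDP k l D F P).ncard = ∑ q ∈ Qbig, hFun k l D F P q := by
    rw [h1, h2, h3, Finset.sum_congr rfl h4]
    exact Finset.sum_subset h5 h6
  rw [h7]
  show ∑ q ∈ Qbig, hFun k l D F P q = ∑ᶠ (E : ℕ →₀ ℕ) (A : Fin l → ℕ) (B : Fin l → ℕ)
    (C : ℕ × ℕ → ℕ), hFun k l D F P (E, A, B, C)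
  have hCsum : ∀ (E : ℕ →₀ ℕ) (A B : Fin l → ℕ),
      (∑ᶠ C : ℕ × ℕ → ℕ, hFun k l D F P (E, A, B, C)) =
        ∑ C ∈ CF, hFun k l D F P (E, A, B, C) := by
    intro E A B
    apply finsum_eq_sum_of_support_subset
    intro C hCne
    rw [Function.mem_support] at hCne
    obtain ⟨hc, _, _⟩ := hFun_ne hCne
    exact Finset.mem_coe.mpr (hCmem C hc.2.2.1 (C_bound hc.2.2.1 hc.2.2.2))
  have hBsum : ∀ (E : ℕ →₀ ℕ) (A : Fin l → ℕ),
      (∑ᶠ B : Fin l → ℕ, ∑ C ∈ CF, hFun k l D F P (E, A, B, C)) =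
        ∑ B ∈ Finset.Iic P, ∑ C ∈ CF, hFun k l D F P (E, A, B, C) := by
    intro E A
    apply finsum_eq_sum_of_support_subset
    intro B hBne
    rw [Function.mem_support] at hBne
    obtain ⟨C, _, hCne⟩ := Finset.exists_ne_zero_of_sum_ne_zero hBne
    obtain ⟨hc, _, _⟩ := hFun_ne hCne
    rw [Finset.mem_coe, Finset.mem_Iic]
    refine Pi.le_def.mpr (fun i => ?_)
    have hsc := congrFun hc.2.2.2 i
    simp only [Scomb] at hsc
    omega
  have hAsum : ∀ E : ℕ →₀ ℕ,
      (∑ᶠ A : Fin l → ℕ, ∑ B ∈ Finset.Iic P, ∑ C ∈ CF, hFun k l D F P (E, A, B, C)) =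
        ∑ A ∈ Finset.Iic P, ∑ B ∈ Finset.Iic P, ∑ C ∈ CF, hFun k l D F P (E, A, B, C) := by
    intro E
    apply finsum_eq_sum_of_support_subset
    intro A hAne
    rw [Function.mem_support] at hAne
    obtain ⟨B, _, hBne⟩ := Finset.exists_ne_zero_of_sum_ne_zero hAne
    obtain ⟨C, _, hCne⟩ := Finset.exists_ne_zero_of_sum_ne_zero hBne
    obtain ⟨hc, _, _⟩ := hFun_ne hCne
    rw [Finset.mem_coe, Finset.mem_Iic]
    refine Pi.le_def.mpr (fun i => ?_)
    have hsc := congrFun hc.2.2.2 i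
    simp only [Scomb] at hsc
    omega
  have hEsum :
      (∑ᶠ E : ℕ →₀ ℕ, ∑ A ∈ Finset.Iic P, ∑ B ∈ Finset.Iic P, ∑ C ∈ CF,
        hFun k l D F P (E, A, B, C)) =
      ∑ E ∈ Finset.Iic D, ∑ A ∈ Finset.Iic P, ∑ B ∈ Finset.Iic P, ∑ C ∈ CF,
        hFun k l D F P (E, A, B, C) := by
    apply finsum_eq_sum_of_support_subset
    intro E hEne
    rw [Function.mem_support] at hEne
    obtain ⟨A, _, hAne⟩ := Finset.exists_ne_zero_of_sum_ne_zero hEne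
    obtain ⟨B, _, hBne⟩ := Finset.exists_ne_zero_of_sum_ne_zero hAne
    obtain ⟨C, _, hCne⟩ := Finset.exists_ne_zero_of_sum_ne_zero hBne
    obtain ⟨_, _, hk2⟩ := hFun_ne hCne
    rw [Finset.mem_coe, Finset.mem_Iic]
    exact E_le_of_kostka hk2
  have hnest : (∑ᶠ (E : ℕ →₀ ℕ) (A : Fin l → ℕ) (B : Fin l → ℕ) (C : ℕ × ℕ → ℕ),
      hFun k l D F P (E, A, B, C)) =
      ∑ E ∈ Finset.Iic D, ∑ A ∈ Finset.Iic P, ∑ B ∈ Finset.Iic P, ∑ C ∈ CF,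
        hFun k l D F P (E, A, B, C) := by
    refine Eq.trans (finsum_congr (fun E => ?_)) hEsum
    refine Eq.trans (finsum_congr (fun A => ?_)) (hAsum E)
    refine Eq.trans (finsum_congr (fun B => ?_)) (hBsum E A)
    exact hCsum E A B
  rw [hnest, hQbig, Finset.sum_product]
  refine Finset.sum_congr rfl (fun E _ => ?_)
  rw [Finset.sum_product]
  refine Finset.sum_congr rfl (fun A _ => ?_)
  rw [Finset.sum_product]

end Pieri
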